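/- arXiv:2308.12070 — 3 statements merged into one kernel-verified Lean document; each statement's English description precedes it below -/
import Mathlib

section
/- An element a ∈ A is a Weyl type element (a ∈ KΦ₀(A)) if and only if a = b + f for some invertible b ∈ A and some f ∈ F. -/
variable {A : Type*}

/-- An orthogonal projection in a C*-algebra. -/
def IsProjectionElem [CStarAlgebra A] (p : A) : Prop := IsSelfAdjoint p ∧ p * p = p

/-- Murray–von Neumann equivalence of projections: `p ∼ q`. -/
def MvNEquiv [CStarAlgebra A] (p q : A) : Prop := ∃ v : A, v * star v = p ∧ star v * v = q

/-- Murray–von Neumann subequivalence `p ⪯ q`: `p` is equivalent to a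
subprojection of `q`. -/
def MvNSubEquiv [CStarAlgebra A] (p q : A) : Prop :=
  ∃ p' : A, IsProjectionElem p' ∧ p' * q = p' ∧ q * p' = p' ∧ MvNEquiv p p'

/-- `a` is invertible up to the pair of projections `(p, q)`. -/
def InvertibleUpTo [CStarAlgebra A] (a p q : A) : Prop :=
  ∃ b : A, (1 - q) * a * (1 - p) * b = 1 - q ∧ b * ((1 - q) * a * (1 - p)) = 1 - p

/-- An ideal of finite type elements in a unital C*-algebra `A`
(Kečkić–Lazović): a selfadjoint (two-sided, complex-linear) ideal possessing an
approximate unit of projections, and such that for any two projections `p, q`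
in the ideal there is `v` with `v v* = q` and `v* v ⊥ p`. -/
structure FiniteTypeIdeal (A : Type*) [CStarAlgebra A] where
  carrier : Set A
  zero_mem : (0 : A) ∈ carrier
  add_mem : ∀ {a b : A}, a ∈ carrier → b ∈ carrier → a + b ∈ carrier
  smul_mem : ∀ (c : ℂ) {a : A}, a ∈ carrier → c • a ∈ carrier
  mul_mem_left : ∀ (a : A) {b : A}, b ∈ carrier → a * b ∈ carrier
  mul_mem_right : ∀ (a : A) {b : A}, b ∈ carrier → b * a ∈ carrier
  star_mem : ∀ {a : A}, a ∈ carrier → star a ∈ carrier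
  approx_unit : ∀ {a : A}, a ∈ carrier → ∀ ε : ℝ, 0 < ε →
    ∃ p ∈ carrier, IsProjectionElem p ∧ ‖a * p - a‖ < ε ∧ ‖p * a - a‖ < ε
  exchange : ∀ {p q : A}, p ∈ carrier → q ∈ carrier →
    IsProjectionElem p → IsProjectionElem q →
    ∃ v : A, v * star v = q ∧ IsProjectionElem (star v * v + p)

variable [CStarAlgebra A]

/-- Upper semi-Fredholm type elements `KΦ₊(A)`. -/
def UpperSemiFredholm (F : FiniteTypeIdeal A) (a : A) : Prop :=
  ∃ p q : A, IsProjectionElem p ∧ IsProjectionElem q ∧ p ∈ F.carrier ∧ InvertibleUpTo a p q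

/-- Lower semi-Fredholm type elements `KΦ₋(A)`. -/
def LowerSemiFredholm (F : FiniteTypeIdeal A) (a : A) : Prop :=
  ∃ p q : A, IsProjectionElem p ∧ IsProjectionElem q ∧ q ∈ F.carrier ∧ InvertibleUpTo a p q

/-- Fredholm type elements `KΦ(A)`. -/
def FredholmType (F : FiniteTypeIdeal A) (a : A) : Prop :=
  ∃ p q : A, IsProjectionElem p ∧ IsProjectionElem q ∧ p ∈ F.carrier ∧ q ∈ F.carrier ∧
    InvertibleUpTo a p q

/-- Upper semi-Weyl type elements `KΦ₊⁻(A)`. -/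
def UpperSemiWeyl (F : FiniteTypeIdeal A) (a : A) : Prop :=
  ∃ p q : A, IsProjectionElem p ∧ IsProjectionElem q ∧ p ∈ F.carrier ∧ MvNSubEquiv p q ∧
    InvertibleUpTo a p q

/-- Lower semi-Weyl type elements `KΦ₋⁺(A)`. -/
def LowerSemiWeyl (F : FiniteTypeIdeal A) (a : A) : Prop :=
  ∃ p q : A, IsProjectionElem p ∧ IsProjectionElem q ∧ q ∈ F.carrier ∧ MvNSubEquiv q p ∧
    InvertibleUpTo a p q

/-- Weyl type elements `KΦ₀(A)`. -/
def WeylType (F : FiniteTypeIdeal A) (a : A) : Prop :=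
  ∃ p q : A, IsProjectionElem p ∧ IsProjectionElem q ∧ p ∈ F.carrier ∧ q ∈ F.carrier ∧
    MvNEquiv p q ∧ InvertibleUpTo a p q

section WeylHelpers

private lemma left_absorb {v p : A} (hv : v * star v = p) (hp : p * p = p) : p * v = v := by
  have hps : star p = p := by rw [← hv, star_mul, star_star]
  have key : (v - p * v) * star (v - p * v) = 0 := by
    rw [star_sub, star_mul, hps]
    have h1 : v * (star v * p) = p := by rw [← mul_assoc, hv, hp]
    have h2 : p * v * star v = p := by rw [mul_assoc, hv, hp]
    have h3 : p * v * (star v * p) = p := by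
      rw [← mul_assoc, mul_assoc p v (star v), hv, hp, hp]
    rw [sub_mul, mul_sub, mul_sub, hv, h1, h2, h3]; simp
  exact (sub_eq_zero.mp ((CStarRing.mul_star_self_eq_zero_iff _).mp key)).symm

private lemma right_absorb {v q : A} (hv : star v * v = q) (hq : q * q = q) : v * q = v := by
  have h := left_absorb (v := star v) (p := q) (by rwa [star_star]) hq
  calc v * q = star (star q * star v) := by rw [star_mul, star_star, star_star]
    _ = star (q * star v) := by rw [show star q = q by rw [← hv, star_mul, star_star]]
    _ = v := by rw [h, star_star]

private lemma sub_mem_ideal (F : FiniteTypeIdeal A) {x y : A} (hx : x ∈ F.carrier)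
    (hy : y ∈ F.carrier) : x - y ∈ F.carrier := by
  have : x + (-1 : ℂ) • y ∈ F.carrier := F.add_mem hx (F.smul_mem _ hy)
  simpa [sub_eq_add_neg, neg_one_smul] using this

private lemma weyl_forward (F : FiniteTypeIdeal A) (a : A) (h : WeylType F a) :
    ∃ b f : A, IsUnit b ∧ f ∈ F.carrier ∧ a = b + f := by
  obtain ⟨p, q, ⟨hps, hpp⟩, ⟨hqs, hqq⟩, hpF, hqF, ⟨v, hv1, hv2⟩, ⟨c, hc1, hc2⟩⟩ := h
  have hpv : p * v = v := left_absorb hv1 hpp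
  have hvq : v * q = v := right_absorb hv2 hqq
  have h1p : (1 - p) * (1 - p) = 1 - p := by
    have : (1 - p) * (1 - p) = 1 - p - (p - p * p) := by noncomm_ring
    rw [this, hpp, sub_self, sub_zero]
  have h1q : (1 - q) * (1 - q) = 1 - q := by
    have : (1 - q) * (1 - q) = 1 - q - (q - q * q) := by noncomm_ring
    rw [this, hqq, sub_self, sub_zero]
  set t : A := (1 - q) * a * (1 - p) with ht
  set c' : A := (1 - p) * c * (1 - q) with hc'
  -- auxiliary products
  have htp : t * (1 - p) = t := by rw [ht, mul_assoc ((1-q)*a) (1-p) (1-p), h1p]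
  have hqt : (1 - q) * t = t := by
    rw [ht, ← mul_assoc, ← mul_assoc, h1q]
  have hbd : (t + star v) * (c' + v) = 1 := by
    have e1 : t * c' = 1 - q := by
      calc t * c' = ((t * (1 - p)) * c) * (1 - q) := by
            rw [hc']; rw [mul_assoc (1-p) c (1-q)]; rw [← mul_assoc t (1-p) (c * (1-q))]
            rw [mul_assoc (t * (1-p)) c (1-q)]
        _ = ((1 - q) * (1 - q)) := by rw [htp, ht, hc1, h1q]
          -- hc1 : (1-q)*a*(1-p)*c = 1-q
        _ = 1 - q := h1q
    have e2 : t * v = 0 := by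
      have : (1 - p) * v = 0 := by rw [sub_mul, one_mul, hpv, sub_self]
      rw [ht, mul_assoc ((1-q)*a) (1-p) v, this, mul_zero]
    have e3 : star v * c' = 0 := by
      have hv' : star v * (1 - p) = 0 := by
        have : star v * p = star v := by
          calc star v * p = star (star p * v) := by rw [star_mul, star_star]
            _ = star (p * v) := by rw [hps]
            _ = star v := by rw [hpv]
        rw [mul_sub, mul_one, this, sub_self]
      rw [hc', ← mul_assoc, ← mul_assoc, hv', zero_mul, zero_mul]
    rw [mul_add, add_mul, add_mul, e1, e2, e3, hv2]
    abel
  have hdb : (c' + v) * (t + star v) = 1 := by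
    have e1 : c' * t = 1 - p := by
      have step : c' * t = (1 - p) * (c * ((1 - q) * t)) := by
        rw [hc', mul_assoc, mul_assoc]
      rw [step, hqt, hc2, h1p]
    have e2 : c' * star v = 0 := by
      have hqv : q * star v = star v := by
        calc q * star v = star (v * star q) := by rw [star_mul, star_star]
          _ = star (v * q) := by rw [show star q = q from hqs.star_eq]
          _ = star v := by rw [hvq]
      have hz : (1 - q) * star v = 0 := by rw [sub_mul, one_mul, hqv, sub_self]
      have step : c' * star v = (1 - p) * (c * ((1 - q) * star v)) := by
        rw [hc', mul_assoc, mul_assoc]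
      rw [step, hz, mul_zero, mul_zero]
    have e3 : v * t = 0 := by
      have : v * (1 - q) = 0 := by rw [mul_sub, mul_one, hvq, sub_self]
      rw [ht, ← mul_assoc, ← mul_assoc, this, zero_mul, zero_mul]
    rw [add_mul, mul_add, mul_add, e1, e2, e3, hv1]
    abel
  refine ⟨t + star v, a - (t + star v), ⟨⟨t + star v, c' + v, hbd, hdb⟩, rfl⟩, ?_, by abel⟩
  have hmem1 : q * a ∈ F.carrier := F.mul_mem_right a hqF
  have hmem2 : a * p ∈ F.carrier := F.mul_mem_left a hpF
  have hmem3 : q * a * p ∈ F.carrier := F.mul_mem_right p (F.mul_mem_right a hqF)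
  have hmemv : star v ∈ F.carrier := by
    have : v * q ∈ F.carrier := F.mul_mem_left v hqF
    rw [hvq] at this
    exact F.star_mem this
  have : a - (t + star v) = (q * a + (a * p - q * a * p)) - star v := by
    rw [ht]; noncomm_ring
  rw [this]
  exact sub_mem_ideal F (F.add_mem hmem1 (sub_mem_ideal F hmem2 hmem3)) hmemv


private lemma scalar_mul_nonneg [PartialOrder A] [StarOrderedRing A] {r : ℝ} (hr : 0 ≤ r)
    {x : A} (hx : 0 ≤ x) : 0 ≤ algebraMap ℝ A r * x := by
  have h1 : algebraMap ℝ A r * x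
      = star (algebraMap ℝ A (Real.sqrt r)) * x * algebraMap ℝ A (Real.sqrt r) := by
    have hsa : star (algebraMap ℝ A (Real.sqrt r)) = algebraMap ℝ A (Real.sqrt r) :=
      IsSelfAdjoint.algebraMap A (isSelfAdjoint_iff.mpr rfl)
    rw [hsa, mul_assoc, ← Algebra.commutes (Real.sqrt r) x, ← mul_assoc, ← map_mul,
      Real.mul_self_sqrt hr]
  rw [h1]
  exact star_left_conjugate_nonneg hx _

set_option maxHeartbeats 1000000 in
private lemma sqrt_stuff [PartialOrder A] [StarOrderedRing A] (c : A) (cu : Aˣ) (hcu : (cu : A) = c) :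
    ∃ h hinv : A, 0 ≤ h ∧ IsSelfAdjoint h ∧ h * h = star c * c ∧
      h * hinv = 1 ∧ hinv * h = 1 ∧ star hinv = hinv ∧
      ∃ δ : ℝ, 0 < δ ∧ algebraMap ℝ A δ ≤ h := by
  set h := CFC.sqrt (star c * c) with hdef
  have hcc : (0 : A) ≤ star c * c := star_mul_self_nonneg c
  have hh0 : (0 : A) ≤ h := CFC.sqrt_nonneg _
  have hh_sa : IsSelfAdjoint h := .of_nonneg hh0
  have hh2 : h * h = star c * c := CFC.sqrt_mul_sqrt_self _ hcc
  have hccu : IsUnit (star c * c) := by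
    rw [← hcu]; exact cu.isUnit.star.mul cu.isUnit
  obtain ⟨kk, hkk⟩ := hccu
  have hkk2 : (kk : A) = h * h := by rw [hkk, hh2]
  have hcom : Commute h (kk : A) := by
    rw [hkk2]; exact (Commute.refl h).mul_right (Commute.refl h)
  have hcomi : Commute h ((kk⁻¹ : Aˣ) : A) := hcom.units_inv_right
  set hinv : A := ((kk⁻¹ : Aˣ) : A) * h with hinvdef
  have hmul2 : hinv * h = 1 := by
    rw [hinvdef, mul_assoc, ← hkk2, Units.inv_mul]
  have hmul1 : h * hinv = 1 := by
    rw [hinvdef, ← mul_assoc, hcomi.eq, mul_assoc, ← hkk2, Units.inv_mul]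
  have e1 : star hinv * h = 1 := by
    rw [← hh_sa.star_eq, ← star_mul, hmul1, star_one]
  have shsa : star hinv = hinv := by
    calc star hinv = star hinv * (h * hinv) := by rw [hmul1, mul_one]
      _ = (star hinv * h) * hinv := by rw [mul_assoc]
      _ = hinv := by rw [e1, one_mul]
  refine ⟨h, hinv, hh0, hh_sa, hh2, hmul1, hmul2, shsa, ?_⟩
  have hinv0 : (0 : A) ≤ hinv := by
    have := star_left_conjugate_nonneg hh0 hinv
    rwa [e1, one_mul] at this
  have h01 : (0 : A) ≤ 1 := by simpa using star_mul_self_nonneg (1 : A)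
  set M : ℝ := ‖hinv‖ + 1 with hMdef
  have hM : (0 : ℝ) < M := by positivity
  have hle : hinv ≤ algebraMap ℝ A M := by
    refine le_trans (IsSelfAdjoint.le_algebraMap_norm_self (isSelfAdjoint_iff.mpr shsa)) ?_
    have e2 : algebraMap ℝ A M - algebraMap ℝ A ‖hinv‖ = 1 := by
      rw [← map_sub, hMdef, add_sub_cancel_left, map_one]
    exact sub_nonneg.mp (e2 ▸ h01)
  set k2 := CFC.sqrt h with hk2def
  have hk22 : k2 * k2 = h := CFC.sqrt_mul_sqrt_self _ hh0
  have k2sa : IsSelfAdjoint k2 := .of_nonneg (CFC.sqrt_nonneg _)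
  have ck2h : Commute k2 h := by
    rw [← hk22]; exact (Commute.refl k2).mul_right (Commute.refl k2)
  have ck2hinv : Commute k2 hinv := by
    rw [hinvdef]
    exact Commute.mul_right (Commute.units_inv_right (hkk2 ▸ ck2h.mul_right ck2h)) ck2h
  have conj := star_left_conjugate_nonneg (sub_nonneg.mpr hle) k2
  have eval : star k2 * (algebraMap ℝ A M - hinv) * k2 = algebraMap ℝ A M * h - 1 := by
    rw [k2sa.star_eq, mul_sub, sub_mul]
    congr 1
    · rw [mul_assoc, Algebra.commutes M k2, ← mul_assoc, hk22, ← Algebra.commutes M h]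
    · rw [ck2hinv.eq, mul_assoc, hk22, hmul2]
  rw [eval] at conj
  refine ⟨M⁻¹, by positivity, ?_⟩
  have big := scalar_mul_nonneg (r := M⁻¹) (by positivity) conj
  have eval2 : algebraMap ℝ A M⁻¹ * (algebraMap ℝ A M * h - 1)
      = h - algebraMap ℝ A M⁻¹ := by
    rw [mul_sub, mul_one, ← mul_assoc, ← map_mul, inv_mul_cancel₀ (ne_of_gt hM), map_one,
      one_mul]
  exact sub_nonneg.mp (eval2 ▸ big)

set_option maxHeartbeats 1000000 in
private lemma weyl_backward (F : FiniteTypeIdeal A) (f : A) (bu : Aˣ) (hf : f ∈ F.carrier) :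
    WeylType F ((bu : A) + f) := by
  letI := CStarAlgebra.spectralOrder A
  haveI := CStarAlgebra.spectralOrderedRing A
  obtain ⟨g, hgdef⟩ : ∃ x : A, x = ((bu⁻¹ : Aˣ) : A) * f := ⟨_, rfl⟩
  have hg : g ∈ F.carrier := by rw [hgdef]; exact F.mul_mem_left _ hf
  have hfg : (bu : A) * g = f := by rw [hgdef, ← mul_assoc, Units.mul_inv, one_mul]
  obtain ⟨p, hpF, ⟨hps, hpp⟩, hgp1, -⟩ := F.approx_unit hg 1 one_pos
  obtain ⟨cu, hcuval⟩ : ∃ x : Aˣ, x = bu * Units.oneSub (g * p - g) hgp1 := ⟨_, rfl⟩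
  obtain ⟨c, hcdef⟩ : ∃ x : A, x = (cu : A) := ⟨_, rfl⟩
  have hcval : c = (bu : A) * (1 - (g * p - g)) := by
    rw [hcdef, hcuval, Units.val_mul]; rfl
  have hp1p : p * (1 - p) = 0 := by rw [mul_sub, mul_one, hpp, sub_self]
  have h1pp : (1 - p) * p = 0 := by rw [sub_mul, one_mul, hpp, sub_self]
  have h1p : (1 - p) * (1 - p) = 1 - p := by rw [mul_sub, mul_one, h1pp, sub_zero]
  have lemA : (g - g * p) * p = 0 := by rw [sub_mul, mul_assoc g p p, hpp, sub_self]
  have key : ((bu : A) + f) * (1 - p) = c * (1 - p) := by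
    have e0 : (1 : A) - (g * p - g) = 1 + (g - g * p) := by abel
    have e1 : (1 + (g - g * p)) * (1 - p) = (1 - p) + (g - g * p) := by
      rw [add_mul, one_mul, mul_sub (g - g * p) 1 p, mul_one, lemA, sub_zero]
    rw [hcval, e0, mul_assoc, e1, mul_add, add_mul]
    congr 1
    rw [mul_sub f 1 p, mul_one, mul_sub (bu : A) g (g * p), ← mul_assoc (bu : A) g p, hfg]
  obtain ⟨h, hinv, hh0, hh_sa, hh2, hmul1, hmul2, shsa, δ, hδpos, hδle⟩ :=
    sqrt_stuff c cu hcdef.symm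
  obtain ⟨u, hudef⟩ : ∃ x : A, x = c * hinv := ⟨_, rfl⟩
  have hstaru : star u = hinv * star c := by rw [hudef, star_mul, shsa]
  have hsuc : star u * c = h := by
    rw [hstaru, mul_assoc, ← hh2, ← mul_assoc hinv h h, hmul2, one_mul]
  have huh : u * h = c := by rw [hudef, mul_assoc, hmul2, mul_one]
  have huu1 : star u * u = 1 := by
    rw [hstaru, hudef, ← mul_assoc, mul_assoc hinv (star c) c, ← hh2,
      ← mul_assoc hinv h h, hmul2, one_mul, hmul1]
  have hcinv : c * ((cu⁻¹ : Aˣ) : A) = 1 := by rw [hcdef]; exact Units.mul_inv cu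
  have huu2 : u * star u = 1 := by
    have e0 : hinv * (hinv * (star c * c)) = 1 := by
      rw [← hh2, ← mul_assoc hinv h h, hmul2, one_mul, hmul2]
    have e1 : hinv * (hinv * star c) = ((cu⁻¹ : Aˣ) : A) := by
      have e2 := congrArg (fun y => y * ((cu⁻¹ : Aˣ) : A)) e0
      simp only [one_mul, mul_assoc] at e2
      rw [hcinv, mul_one] at e2
      exact e2
    rw [hstaru, hudef, mul_assoc c hinv (hinv * star c), e1, hcinv]
  obtain ⟨q, hqdef⟩ : ∃ x : A, x = u * (p * star u) := ⟨_, rfl⟩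
  have hq_sa : star q = q := by
    rw [hqdef, star_mul, star_mul, star_star, hps.star_eq, mul_assoc]
  have hq2 : q * q = q := by
    rw [hqdef]
    have e : u * (p * star u) * (u * (p * star u))
        = u * (p * ((star u * u) * (p * star u))) := by simp only [mul_assoc]
    rw [e, huu1, one_mul, ← mul_assoc p p (star u), hpp]
  have hqF : q ∈ F.carrier := by
    rw [hqdef]; exact F.mul_mem_left u (F.mul_mem_right (star u) hpF)
  have hmvn : MvNEquiv p q := by
    refine ⟨p * star u, ?_, ?_⟩
    · rw [star_mul, star_star, hps.star_eq]
      have e : p * star u * (u * p) = p * ((star u * u) * p) := by simp only [mul_assoc]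
      rw [e, huu1, one_mul, hpp]
    · rw [star_mul, star_star, hps.star_eq, hqdef]
      have e : u * p * (p * star u) = u * ((p * p) * star u) := by simp only [mul_assoc]
      rw [e, hpp]
  obtain ⟨N, hNdef⟩ : ∃ x : A, x = (1 - p) * (h * (1 - p)) := ⟨_, rfl⟩
  obtain ⟨Y, hYdef⟩ : ∃ x : A, x = N + p := ⟨_, rfl⟩
  have hNY : N = Y - p := by rw [hYdef]; abel
  have hpN : p * N = 0 := by rw [hNdef, ← mul_assoc p (1 - p) _, hp1p, zero_mul]
  have hN1p : N * (1 - p) = N := by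
    rw [hNdef, mul_assoc (1 - p) (h * (1 - p)) (1 - p), mul_assoc h (1 - p) (1 - p), h1p]
  have h1pN : (1 - p) * N = N := by rw [hNdef, ← mul_assoc (1 - p) (1 - p) _, h1p]
  have hNp : N * p = 0 := by
    rw [hNdef, mul_assoc (1 - p) (h * (1 - p)) p, mul_assoc h (1 - p) p, h1pp, mul_zero,
      mul_zero]
  have hpY : p * Y = p := by rw [hYdef, mul_add, hpN, hpp, zero_add]
  have hYp : Y * p = p := by rw [hYdef, add_mul, hNp, hpp, zero_add]
  have h01 : (0 : A) ≤ 1 := by simpa using star_mul_self_nonneg (1 : A)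
  have hp0 : (0 : A) ≤ p := by
    have := star_mul_self_nonneg p
    rwa [hps.star_eq, hpp] at this
  obtain ⟨δ', hδ'def⟩ : ∃ x : ℝ, x = min δ 1 := ⟨_, rfl⟩
  have hδ'pos : 0 < δ' := by rw [hδ'def]; exact lt_min hδpos one_pos
  have hδ'le1 : δ' ≤ 1 := by rw [hδ'def]; exact min_le_right _ _
  have hδ'leδ : δ' ≤ δ := by rw [hδ'def]; exact min_le_left _ _
  have halg_le : algebraMap ℝ A δ' ≤ h := by
    refine le_trans (sub_nonneg.mp ?_) hδle
    rw [← map_sub]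
    have := scalar_mul_nonneg (A := A) (sub_nonneg.mpr hδ'leδ) h01
    rwa [mul_one] at this
  have part1 : (0 : A) ≤ N - algebraMap ℝ A δ' * (1 - p) := by
    have hst : star ((1 : A) - p) = 1 - p := by rw [star_sub, star_one, hps.star_eq]
    have hconj := star_left_conjugate_nonneg (sub_nonneg.mpr halg_le) (1 - p)
    rw [hst] at hconj
    have e : ((1 : A) - p) * (h - algebraMap ℝ A δ') * (1 - p)
        = N - algebraMap ℝ A δ' * (1 - p) := by
      rw [mul_sub (1 - p) h (algebraMap ℝ A δ'), sub_mul]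
      congr 1
      · rw [hNdef, mul_assoc]
      · rw [← Algebra.commutes δ' ((1 : A) - p), mul_assoc, h1p]
    rwa [e] at hconj
  have part2 : (0 : A) ≤ p - algebraMap ℝ A δ' * p := by
    have := scalar_mul_nonneg (A := A) (sub_nonneg.mpr hδ'le1) hp0
    rwa [map_sub, map_one, sub_mul, one_mul] at this
  have Ylow : algebraMap ℝ A δ' ≤ Y := by
    refine sub_nonneg.mp ?_
    have hsum := add_nonneg part1 part2
    have e : N - algebraMap ℝ A δ' * (1 - p) + (p - algebraMap ℝ A δ' * p)
        = Y - algebraMap ℝ A δ' := by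
      rw [hYdef, mul_sub, mul_one]; abel
    rwa [e] at hsum
  have hY0 : (0 : A) ≤ algebraMap ℝ A δ' := by
    have := scalar_mul_nonneg (A := A) hδ'pos.le h01
    rwa [mul_one] at this
  have hYunit : IsUnit Y := CStarAlgebra.isUnit_of_le _ Ylow
    ⟨hY0, (isUnit_iff_ne_zero.mpr (ne_of_gt hδ'pos)).map (algebraMap ℝ A)⟩
  obtain ⟨Yu, hYuv⟩ := hYunit
  have hYi1 : Y * ((Yu⁻¹ : Aˣ) : A) = 1 := by rw [← hYuv]; exact Yu.mul_inv
  have hYi2 : ((Yu⁻¹ : Aˣ) : A) * Y = 1 := by rw [← hYuv]; exact Yu.inv_mul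
  have hcommY : Commute p (Yu : A) := by rw [hYuv]; exact hpY.trans hYp.symm
  have hcYi : p * ((Yu⁻¹ : Aˣ) : A) = ((Yu⁻¹ : Aˣ) : A) * p := hcommY.units_inv_right
  have ht : (1 - q) * ((bu : A) + f) * (1 - p) = u * N := by
    rw [mul_assoc, key]
    have e1 : c * (1 - p) = u * (h * (1 - p)) := by rw [← huh, mul_assoc]
    have e2 : q * (u * (h * (1 - p))) = u * (p * (h * (1 - p))) := by
      rw [hqdef]
      have e : u * (p * star u) * (u * (h * (1 - p)))
          = u * (p * ((star u * u) * (h * (1 - p)))) := by simp only [mul_assoc]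
      rw [e, huu1, one_mul]
    rw [sub_mul, one_mul, e1, e2, hNdef, sub_mul (1 : A) p (h * (1 - p)), one_mul,
      mul_sub u (h * (1 - p)) (p * (h * (1 - p)))]
  refine ⟨p, q, ⟨hps, hpp⟩, ⟨hq_sa, hq2⟩, hpF, hqF, hmvn,
    (1 - p) * (((Yu⁻¹ : Aˣ) : A) * ((1 - p) * star u)), ?_, ?_⟩
  · rw [ht]
    have hNYi : N * ((Yu⁻¹ : Aˣ) : A) = 1 - p * ((Yu⁻¹ : Aˣ) : A) := by
      rw [hNY, sub_mul, hYi1]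
    have hstep : N * ((1 - p) * (((Yu⁻¹ : Aˣ) : A) * ((1 - p) * star u)))
        = (1 - p) * star u := by
      rw [← mul_assoc N (1 - p) _, hN1p, ← mul_assoc N _ _, hNYi, sub_mul, one_mul, hcYi,
        mul_assoc ((Yu⁻¹ : Aˣ) : A) p ((1 - p) * star u), ← mul_assoc p (1 - p) (star u),
        hp1p, zero_mul, mul_zero, sub_zero]
    rw [mul_assoc u N _, hstep, sub_mul (1 : A) p (star u), one_mul, mul_sub, huu2, ← hqdef]
  · rw [ht]
    have hYNi : ((Yu⁻¹ : Aˣ) : A) * N = 1 - ((Yu⁻¹ : Aˣ) : A) * p := by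
      rw [hNY, mul_sub, hYi2]
    have e : (1 - p) * (((Yu⁻¹ : Aˣ) : A) * ((1 - p) * star u)) * (u * N)
        = (1 - p) * (((Yu⁻¹ : Aˣ) : A) * ((1 - p) * ((star u * u) * N))) := by
      simp only [mul_assoc]
    rw [e, huu1, one_mul, h1pN, hYNi, mul_sub, mul_one, ← hcYi,
      ← mul_assoc (1 - p) p ((Yu⁻¹ : Aˣ) : A), h1pp, zero_mul, sub_zero]

end WeylHelpers

/-- Proposition 17(3) of [BJMA]: `a` is a Weyl type element iff `a = b + f`
with `b` invertible and `f` of finite type. -/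
theorem weylType_iff_invertible_plus_finite (F : FiniteTypeIdeal A) (a : A) :
    WeylType F a ↔ ∃ b f : A, IsUnit b ∧ f ∈ F.carrier ∧ a = b + f := by
  constructor
  · exact weyl_forward F a
  · rintro ⟨b, f, hb, hf, rfl⟩
    obtain ⟨bu, rfl⟩ := hb
    exact weyl_backward F f bu hf
end

section
/- The set of upper semi-Weyl type elements KΦ₊⁻(A) is invariant under perturbation by finite type elements: if a ∈ KΦ₊⁻(A) and k ∈ F, then a + k ∈ KΦ₊⁻(A). -/
variable {A : Type*}

variable [CStarAlgebra A]

section AuxLemmas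

set_option maxHeartbeats 1000000

lemma aux_norm_proj_le_one {e : A} (hs : star e = e) (h2 : e * e = e) : ‖e‖ ≤ 1 := by
  have key : ‖e‖ * ‖e‖ = ‖e‖ := by
    rw [← CStarRing.norm_star_mul_self (x := e), hs, h2]
  nlinarith [norm_nonneg e]

lemma aux_partial_isom {v : A} (h2 : (v * star v) * (v * star v) = v * star v) :
    v * star v * v = v := by
  have hx : (v * star v * v - v) * star (v * star v * v - v) = 0 := by
    have hstar : star (v * star v * v - v) = star v * (v * star v) - star v := by
      simp only [star_sub, star_mul, star_star, mul_assoc]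
    rw [hstar]
    have expand : (v * star v * v - v) * (star v * (v * star v) - star v) =
        (v * star v) * (v * star v) * (v * star v) - (v * star v) * (v * star v)
          - (v * star v) * (v * star v) + v * star v := by
      noncomm_ring
    rw [expand]
    simp only [h2]
    abel
  have hnorm : ‖v * star v * v - v‖ * ‖v * star v * v - v‖ = 0 := by
    rw [← CStarRing.norm_self_mul_star, hx, norm_zero]
  have h0 : ‖v * star v * v - v‖ = 0 := by nlinarith [norm_nonneg (v * star v * v - v)]
  exact sub_eq_zero.mp (norm_eq_zero.mp h0)

lemma aux_corner_inv {z β f : A} (hfs : star f = f) (hf2 : f * f = f)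
    (hz : z * f = z) (hβ : β * z = f) :
    ∃ g : A, star g = g ∧ g * f = g ∧ f * g = g ∧
      g * (star z * z) = f ∧ (star z * z) * g = f ∧
      (∀ x ∈ spectrum ℝ g, (0:ℝ) ≤ x) := by
  let _ := CStarAlgebra.spectralOrder A
  have _ := CStarAlgebra.spectralOrderedRing A
  set T := star z * z + (1 - f) with hT
  have hcf_eq : (1 - f) * (1 - f) = 1 - f := by
    have h : (1 - f) * (1 - f) = 1 - f - f + f * f := by noncomm_ring
    rw [h, hf2]; abel
  have hcf_star : star (1 - f) = 1 - f := by rw [star_sub, star_one, hfs]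
  have hzf0 : z * (1 - f) = 0 := by rw [mul_sub, mul_one, hz, sub_self]
  have hTsa : star T = T := by
    rw [hT, star_add, star_mul, star_star, hcf_star]
  have hT1f : T * (1 - f) = 1 - f := by
    rw [hT, add_mul, mul_assoc, hzf0, mul_zero, zero_add, hcf_eq]
  have h1fT : (1 - f) * T = 1 - f := by
    have h := congrArg star hT1f
    rwa [star_mul, hcf_star, hTsa] at h
  have hzz_nonneg : (0:A) ≤ star z * z := star_mul_self_nonneg z
  have hcf_nonneg : (0:A) ≤ 1 - f := by
    have h : star (1 - f) * (1 - f) = 1 - f := by rw [hcf_star, hcf_eq]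
    rw [← h]; exact star_mul_self_nonneg _
  have hT_nonneg : (0:A) ≤ T := add_nonneg hzz_nonneg hcf_nonneg
  set C := ‖star β * β‖ with hC
  have hC0 : (0:ℝ) ≤ C := norm_nonneg _
  set c := (1 + C)⁻¹ with hc
  have hc_pos : (0:ℝ) < c := by positivity
  have hc_mul : c * (1 + C) = 1 := by rw [hc]; field_simp
  have hc_le_one : c ≤ 1 := by nlinarith
  have hcC_le_one : c * C ≤ 1 := by nlinarith
  have halg_sa : ∀ r : ℝ, star (algebraMap ℝ A r) = algebraMap ℝ A r := fun r => by
    rw [← algebraMap_star_comm, star_trivial]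
  have hconj_smul : ∀ r : ℝ, 0 ≤ r → ∀ x : A,
      star (algebraMap ℝ A (Real.sqrt r)) * x * (algebraMap ℝ A (Real.sqrt r)) = r • x := by
    intro r hr x
    rw [halg_sa]
    calc algebraMap ℝ A (Real.sqrt r) * x * algebraMap ℝ A (Real.sqrt r)
        = algebraMap ℝ A (Real.sqrt r) * (x * algebraMap ℝ A (Real.sqrt r)) := by
          rw [mul_assoc]
      _ = algebraMap ℝ A (Real.sqrt r) * (algebraMap ℝ A (Real.sqrt r) * x) := by
          rw [← Algebra.commutes (Real.sqrt r) x]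
      _ = (algebraMap ℝ A (Real.sqrt r) * algebraMap ℝ A (Real.sqrt r)) * x := by
          rw [mul_assoc]
      _ = algebraMap ℝ A (Real.sqrt r * Real.sqrt r) * x := by rw [map_mul]
      _ = algebraMap ℝ A r * x := by rw [Real.mul_self_sqrt hr]
      _ = r • x := by rw [← Algebra.smul_def]
  have hsmul_mono : ∀ r : ℝ, 0 ≤ r → ∀ x y : A, x ≤ y → r • x ≤ r • y := by
    intro r hr x y hxy
    have h := star_left_conjugate_le_conjugate hxy (algebraMap ℝ A (Real.sqrt r))
    rwa [hconj_smul r hr, hconj_smul r hr] at h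
  have hsmul_nonneg : ∀ r : ℝ, 0 ≤ r → ∀ x : A, 0 ≤ x → (0:A) ≤ r • x := by
    intro r hr x hx
    have h := star_left_conjugate_nonneg hx (algebraMap ℝ A (Real.sqrt r))
    rwa [hconj_smul r hr] at h
  have hf_eq : star z * (star β * β) * z = f := by
    calc star z * (star β * β) * z = (star z * star β) * (β * z) := by noncomm_ring
      _ = star (β * z) * (β * z) := by rw [star_mul]
      _ = star f * f := by rw [hβ]
      _ = f := by rw [hfs, hf2]
  have hββ : star β * β ≤ algebraMap ℝ A C := IsSelfAdjoint.le_algebraMap_norm_self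
  have key1 : f ≤ C • (star z * z) := by
    have h2 := star_left_conjugate_le_conjugate hββ z
    rw [hf_eq] at h2
    calc f ≤ star z * algebraMap ℝ A C * z := h2
      _ = C • (star z * z) := by
          rw [Algebra.algebraMap_eq_smul_one, mul_smul_comm, mul_one, smul_mul_assoc]
  have key2 : c • (1:A) ≤ T := by
    have h1 : c • (1:A) = c • f + c • (1 - f) := by rw [← smul_add]; congr 1; abel
    rw [h1, hT]
    apply add_le_add
    · calc c • f ≤ c • (C • (star z * z)) := hsmul_mono c hc_pos.le _ _ key1
        _ = (c * C) • (star z * z) := by rw [smul_smul]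
        _ ≤ star z * z := by
            have h3 : star z * z - (c * C) • (star z * z) = (1 - c * C) • (star z * z) := by
              rw [sub_smul, one_smul]
            have h4 : (0:A) ≤ (1 - c * C) • (star z * z) :=
              hsmul_nonneg _ (by linarith) _ hzz_nonneg
            rw [← sub_nonneg, h3]; exact h4
    · have h3 : (1 - f) - c • (1 - f) = (1 - c) • (1 - f) := by
        rw [sub_smul, one_smul]
      have h4 : (0:A) ≤ (1 - c) • (1 - f) := hsmul_nonneg _ (by linarith) _ hcf_nonneg
      rw [← sub_nonneg, h3]; exact h4
  have hc1_unit : IsUnit (c • (1:A)) := by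
    have h1 : (c • (1:A)) * (c⁻¹ • (1:A)) = 1 := by
      rw [smul_mul_assoc, one_mul, smul_smul, mul_inv_cancel₀ hc_pos.ne', one_smul]
    have h2 : (c⁻¹ • (1:A)) * (c • (1:A)) = 1 := by
      rw [smul_mul_assoc, one_mul, smul_smul, inv_mul_cancel₀ hc_pos.ne', one_smul]
    exact ⟨⟨c • (1:A), c⁻¹ • (1:A), h1, h2⟩, rfl⟩
  have hc1_nonneg : (0:A) ≤ c • 1 := hsmul_nonneg c hc_pos.le 1 zero_le_one
  have hT_unit : IsUnit T := CStarAlgebra.isUnit_of_le _ key2 (hc1_unit.isStrictlyPositive hc1_nonneg)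
  obtain ⟨U, hU⟩ := hT_unit
  set t := ((U⁻¹ : Aˣ) : A) with ht
  have htT : t * T = 1 := by rw [ht, ← hU]; exact U.inv_mul
  have hTt : T * t = 1 := by rw [ht, ← hU]; exact U.mul_inv
  have ht_sa : star t = t := by
    have h1 : star t * T = 1 := by
      rw [← hTsa, ← star_mul, hTt, star_one]
    calc star t = star t * (T * t) := by rw [hTt, mul_one]
      _ = (star t * T) * t := by rw [mul_assoc]
      _ = t := by rw [h1, one_mul]
  have ht1f : t * (1 - f) = 1 - f := by
    calc t * (1 - f) = t * (T * (1 - f)) := by rw [hT1f]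
      _ = (t * T) * (1 - f) := by rw [mul_assoc]
      _ = 1 - f := by rw [htT, one_mul]
  have h1ft : (1 - f) * t = 1 - f := by
    calc (1 - f) * t = ((1 - f) * T) * t := by rw [h1fT]
      _ = (1 - f) * (T * t) := by rw [mul_assoc]
      _ = 1 - f := by rw [hTt, mul_one]
  have htf : t * f = t - (1 - f) := by
    have h : t * f = t * 1 - t * (1 - f) := by rw [← mul_sub]; congr 1; abel
    rw [h, mul_one, ht1f]
  have hft : f * t = t - (1 - f) := by
    have h : f * t = 1 * t - (1 - f) * t := by rw [← sub_mul]; congr 1; abel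
    rw [h, one_mul, h1ft]
  have hf1f : f * (1 - f) = 0 := by rw [mul_sub, mul_one, hf2, sub_self]
  have h1ff : (1 - f) * f = 0 := by rw [sub_mul, one_mul, hf2, sub_self]
  refine ⟨t - (1 - f), ?_, ?_, ?_, ?_, ?_, ?_⟩
  · rw [star_sub, ht_sa, hcf_star]
  · rw [sub_mul, htf, h1ff, sub_zero]
  · rw [mul_sub, hft, hf1f, sub_zero]
  · have hzz1f : (1 - f) * (star z * z) = 0 := by
      have h1 : (star z * z) * (1 - f) = 0 := by rw [mul_assoc, hzf0, mul_zero]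
      have h := congrArg star h1
      rwa [star_mul, hcf_star, star_mul, star_star, star_zero] at h
    rw [sub_mul, hzz1f, sub_zero]
    have h2 : star z * z = T - (1 - f) := by rw [hT]; abel
    rw [h2, mul_sub, htT, ht1f]
    abel
  · have h1fzz : (star z * z) * (1 - f) = 0 := by rw [mul_assoc, hzf0, mul_zero]
    rw [mul_sub, h1fzz, sub_zero]
    have h2 : star z * z = T - (1 - f) := by rw [hT]; abel
    rw [h2, sub_mul, hTt, h1ft]
    abel
  · intro x hx
    have ht_nonneg : (0:A) ≤ t := by
      have h1 : t = star t * T * t := by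
        rw [ht_sa, mul_assoc, hTt, mul_one]
      rw [h1]; exact star_left_conjugate_nonneg hT_nonneg t
    have hg_eq : t - (1 - f) = star f * t * f := by
      rw [hfs, mul_assoc, htf, mul_sub, hft, hf1f, sub_zero]
    have hg_nonneg : (0:A) ≤ t - (1 - f) := by
      rw [hg_eq]; exact star_left_conjugate_nonneg ht_nonneg f
    exact spectrum_nonneg_of_nonneg hg_nonneg hx

lemma aux_commute_cfc {a m : A} (ha : IsSelfAdjoint a) (hm : m * a = a * m) (func : ℝ → ℝ) :
    m * cfc func a = cfc func a * m := by
  by_cases hcont : ContinuousOn func (spectrum ℝ a)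
  · rw [cfc_apply func a ha hcont]
    set φ : C(spectrum ℝ a, ℝ) →⋆ₐ[ℝ] A := cfcHom (R := ℝ) ha with hφ
    have hφcont : Continuous φ := (cfcHom_isClosedEmbedding (R := ℝ) ha).continuous
    set X : C(spectrum ℝ a, ℝ) := (ContinuousMap.id ℝ).restrict (spectrum ℝ a) with hX
    have hφX : φ X = a := cfcHom_id (R := ℝ) ha
    set G : Set C(spectrum ℝ a, ℝ) := {h | m * φ h = φ h * m} with hG
    have hGclosed : IsClosed G := by
      have : G = (fun h => m * φ h - φ h * m) ⁻¹' {0} := by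
        ext h; simp [hG, sub_eq_zero]
      rw [this]
      exact IsClosed.preimage (by continuity) isClosed_singleton
    set S : Subalgebra ℝ C(spectrum ℝ a, ℝ) := Algebra.adjoin ℝ {X} with hS
    have hSsep : S.SeparatesPoints := by
      intro x y hxy
      refine ⟨X, ?_, ?_⟩
      · exact ⟨X, Algebra.subset_adjoin rfl, rfl⟩
      · simpa [hX, ContinuousMap.restrict] using Subtype.coe_injective.ne hxy
    have hdense : S.topologicalClosure = ⊤ :=
      ContinuousMap.subalgebra_topologicalClosure_eq_top_of_separatesPoints S hSsep
    have hSG : (S : Set C(spectrum ℝ a, ℝ)) ⊆ G := by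
      intro h hh
      induction hh using Algebra.adjoin_induction with
      | mem x hx =>
        rcases hx with rfl
        simp only [hG, Set.mem_setOf_eq, hφX, hm]
      | algebraMap r =>
        simp only [hG, Set.mem_setOf_eq, AlgHomClass.commutes]
        exact (Algebra.commutes r m).symm
      | add u v hu hv hu' hv' =>
        simp only [hG, Set.mem_setOf_eq, map_add, mul_add, add_mul] at *
        rw [hu', hv']
      | mul u v hu hv hu' hv' =>
        simp only [hG, Set.mem_setOf_eq, map_mul] at *
        calc m * (φ u * φ v) = (m * φ u) * φ v := by rw [mul_assoc]
          _ = φ u * (m * φ v) := by rw [hu', mul_assoc]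
          _ = φ u * φ v * m := by rw [hv', mul_assoc]
    have hfmem : (⟨_, hcont.restrict⟩ : C(spectrum ℝ a, ℝ)) ∈ G := by
      have h1 : (⟨_, hcont.restrict⟩ : C(spectrum ℝ a, ℝ)) ∈ S.topologicalClosure := by
        rw [hdense]; trivial
      have h2 : (S.topologicalClosure : Set C(spectrum ℝ a, ℝ)) ⊆ G :=
        closure_minimal hSG hGclosed
      exact h2 h1
    exact hfmem
  · rw [cfc_apply_of_not_continuousOn a hcont, mul_zero, zero_mul]

end AuxLemmas

set_option maxHeartbeats 2000000

/-- The set of upper semi-Weyl type elements is invariant under perturbations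
by finite type elements. -/
theorem upperSemiWeyl_add_finite (F : FiniteTypeIdeal A) (a k : A)
    (ha : UpperSemiWeyl F a) (hk : k ∈ F.carrier) : UpperSemiWeyl F (a + k) := by
  obtain ⟨p, q, hp, hq, hpF, ⟨p', hp'proj, hp'q, hqp', v, hvv, hv2⟩, b, hb1, hb2⟩ := ha
  have hps : star p = p := hp.1
  have hp2 : p * p = p := hp.2
  -- v is a partial isometry
  have hvid : v * star v * v = v := aux_partial_isom (by rw [hvv]; exact hp2)
  have hpv : p * v = v := by rw [← hvv]; exact hvid
  have hsv : p' * star v = star v := by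
    have h := congrArg star hvid
    rw [star_mul, star_mul, star_star] at h
    calc p' * star v = (star v * v) * star v := by rw [hv2]
      _ = star v * (v * star v) := by rw [mul_assoc]
      _ = star v := h
  have hqsv : q * star v = star v := by
    calc q * star v = q * (p' * star v) := by rw [hsv]
      _ = (q * p') * star v := by rw [mul_assoc]
      _ = p' * star v := by rw [hqp']
      _ = star v := hsv
  -- the left invertible part and its inverse
  set w : A := a * (1 - p) with hwdef
  set m : A := b * (1 - q) with hmdef
  set l : A := w + star v with hldef
  set y : A := m + v - v * w * m with hydef
  have h1p : (1 - p) * (1 - p) = 1 - p := by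
    have h : (1 - p) * (1 - p) = 1 - p - p + p * p := by noncomm_ring
    rw [h, hp2]; abel
  have hw1p : w * (1 - p) = w := by rw [hwdef, mul_assoc, h1p]
  have hm1 : m * w = 1 - p := by
    rw [hmdef, hwdef]
    simpa only [mul_assoc] using hb2
  have h1qsv : (1 - q) * star v = 0 := by rw [sub_mul, one_mul, hqsv, sub_self]
  have hmv : m * star v = 0 := by rw [hmdef, mul_assoc, h1qsv, mul_zero]
  have hyl : y * l = 1 := by
    have expand : y * l =
        m * w + m * star v + (v * w + v * star v) - (v * w * (m * w) + v * w * (m * star v)) := by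
      rw [hydef, hldef]; noncomm_ring
    rw [expand, hm1, hmv, hvv, mul_zero, add_zero, mul_assoc v w (1 - p), hw1p]
    abel
  -- the finite perturbation
  set K : A := a + k - l with hKdef
  have hlK : l + K = a + k := by rw [hKdef]; abel
  have hvF : v ∈ F.carrier := by rw [← hpv]; exact F.mul_mem_right v hpF
  have hKF : K ∈ F.carrier := by
    have hKeq : K = (a * p + k) + (-1 : ℂ) • (star v) := by
      rw [neg_one_smul, hKdef, hldef, hwdef]; noncomm_ring
    rw [hKeq]
    exact F.add_mem (F.add_mem (F.mul_mem_left a hpF) hk)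
      (F.smul_mem (-1) (F.star_mem hvF))
  -- choose the approximate unit projection
  set ε : ℝ := (3 * (1 + ‖y‖))⁻¹ with hεdef
  have hεpos : 0 < ε := by rw [hεdef]; positivity
  obtain ⟨e, heF, heproj, hKe, -⟩ := F.approx_unit hKF ε hεpos
  have hse : star e = e := heproj.1
  have he2 : e * e = e := heproj.2
  have h1e : (1 - e) * (1 - e) = 1 - e := by
    have h : (1 - e) * (1 - e) = 1 - e - e + e * e := by noncomm_ring
    rw [h, he2]; abel
  have h1es : star (1 - e) = 1 - e := by rw [star_sub, star_one, hse]
  have he1e : e * (1 - e) = 0 := by rw [mul_sub, mul_one, he2, sub_self]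
  -- the small element u
  set u : A := y * (K - K * e) with hudef
  have hue : u * (1 - e) = u := by
    rw [hudef, mul_assoc]
    congr 1
    have h : (K - K * e) * (1 - e) = K - K * e - K * e + K * (e * e) := by noncomm_ring
    rw [h, he2]; abel
  have hu_norm : ‖u‖ < 1 / 3 := by
    have h1 : ‖u‖ ≤ ‖y‖ * ‖K - K * e‖ := by rw [hudef]; exact norm_mul_le _ _
    have h2 : ‖K - K * e‖ < ε := by rw [norm_sub_rev]; exact hKe
    have h3 : ‖u‖ ≤ ‖y‖ * ε :=
      h1.trans (mul_le_mul_of_nonneg_left h2.le (norm_nonneg y))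
    have h4 : ε * (3 * (1 + ‖y‖)) = 1 := by
      rw [hεdef]; field_simp
    nlinarith [norm_nonneg y, norm_nonneg u]
  have hu_lt : ‖-u‖ < 1 := by rw [norm_neg]; linarith
  set U : Aˣ := Units.oneSub (-u) hu_lt with hUdef
  have hUval : (U : A) = 1 + u := by rw [hUdef, Units.val_oneSub, sub_neg_eq_add]
  set v₀ : A := ((U⁻¹ : Aˣ) : A) with hv₀def
  have hv₀l : v₀ * (1 + u) = 1 := by rw [hv₀def, ← hUval]; exact U.inv_mul
  have hv₀r : (1 + u) * v₀ = 1 := by rw [hv₀def, ← hUval]; exact U.mul_inv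
  have h1norm : ‖(1:A)‖ ≤ 1 := aux_norm_proj_le_one (star_one A) (one_mul 1)
  have hv₀n : ‖v₀‖ ≤ 3 / 2 := by
    have h1 : v₀ = 1 - v₀ * u := by
      have h := hv₀l
      rw [mul_add, mul_one] at h
      exact eq_sub_of_add_eq h
    have h2 : ‖v₀‖ ≤ ‖(1:A)‖ + ‖v₀ * u‖ := by
      have h2x := norm_sub_le (1:A) (v₀ * u)
      rw [← h1] at h2x
      exact h2x
    have h3 : ‖v₀ * u‖ ≤ ‖v₀‖ * ‖u‖ := norm_mul_le _ _
    nlinarith [norm_nonneg v₀, norm_nonneg u]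
  -- the compression z and its corner inverse data
  set z : A := (a + k) * (1 - e) with hzdef
  have hze : z * (1 - e) = z := by rw [hzdef, mul_assoc, h1e]
  have hyz : y * z = (1 + u) * (1 - e) := by
    have h1 : y * z = y * (l * (1 - e)) + y * (K * (1 - e)) := by
      rw [hzdef, ← hlK]
      rw [add_mul, mul_add]
    have h2 : y * (l * (1 - e)) = 1 - e := by rw [← mul_assoc, hyl, one_mul]
    have h3 : y * (K * (1 - e)) = u := by rw [hudef, mul_sub K 1 e, mul_one]
    have h4 : (1 + u) * (1 - e) = (1 - e) + u := by
      rw [add_mul, one_mul, hue]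
    rw [h1, h2, h3, h4]
  set β : A := (1 - e) * (v₀ * y) with hβdef
  have hβz : β * z = 1 - e := by
    calc β * z = (1 - e) * (v₀ * (y * z)) := by rw [hβdef]; simp only [mul_assoc]
      _ = (1 - e) * (v₀ * ((1 + u) * (1 - e))) := by rw [hyz]
      _ = (1 - e) * ((v₀ * (1 + u)) * (1 - e)) := by rw [mul_assoc]
      _ = (1 - e) * (1 - e) := by rw [hv₀l, one_mul]
      _ = 1 - e := h1e
  obtain ⟨γ, hγs, hγ1e, h1eγ, hγzz, hzzγ, -⟩ := aux_corner_inv h1es h1e hze hβz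
  -- the range projection
  set Q' : A := z * (γ * star z) with hQ'def
  have hQ's : star Q' = Q' := by
    rw [hQ'def, star_mul, star_mul, star_star, hγs, mul_assoc]
  have hQ'z : Q' * z = z := by
    calc Q' * z = z * (γ * (star z * z)) := by rw [hQ'def]; simp only [mul_assoc]
      _ = z * (1 - e) := by rw [hγzz]
      _ = z := hze
  have hQ'Q' : Q' * Q' = Q' := by
    calc Q' * Q' = (Q' * z) * (γ * star z) := by rw [hQ'def, ← mul_assoc]
      _ = z * (γ * star z) := by rw [hQ'z]
      _ = Q' := by rw [hQ'def]
  set Q : A := 1 - Q' with hQdef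
  have hQs : star Q = Q := by rw [hQdef, star_sub, star_one, hQ's]
  have hQ2 : Q * Q = Q := by
    rw [hQdef]
    have h : (1 - Q') * (1 - Q') = 1 - Q' - Q' + Q' * Q' := by noncomm_ring
    rw [h, hQ'Q']; abel
  have h1Q : 1 - Q = Q' := by rw [hQdef]; exact sub_sub_cancel 1 Q'
  -- invertibility of a + k up to (e, Q)
  have hinv1 : (1 - Q) * (a + k) * (1 - e) * (γ * star z) = 1 - Q := by
    rw [h1Q, mul_assoc Q' (a + k) (1 - e), ← hzdef, hQ'z, ← hQ'def]
  have hinv2 : (γ * star z) * ((1 - Q) * (a + k) * (1 - e)) = 1 - e := by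
    rw [h1Q, mul_assoc Q' (a + k) (1 - e), ← hzdef, hQ'z, mul_assoc, hγzz]
  -- the comparison map W and its corner left inverse
  set W : A := (1 - Q') * (l * e) with hWdef
  have hWe : W * e = W := by
    rw [hWdef]
    simp only [mul_assoc, he2]
  have hQ'W : Q' * W = 0 := by
    rw [hWdef, ← mul_assoc, mul_sub, mul_one, hQ'Q', sub_self, zero_mul]
  have hγmul : ∀ x : A, (1 - e) * (γ * x) = γ * x := by
    intro x
    rw [← mul_assoc, h1eγ]
  have heγ : e * γ = 0 := by
    calc e * γ = e * ((1 - e) * γ) := by rw [h1eγ]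
      _ = (e * (1 - e)) * γ := by rw [mul_assoc]
      _ = 0 := by rw [he1e, zero_mul]
  set c₀ : A := γ * (star z * (l * e)) with hc₀def
  have hec₀ : e * c₀ = 0 := by
    rw [hc₀def, ← mul_assoc, heγ, zero_mul]
  have hyW : y * W = e - (1 + u) * c₀ := by
    have h1 : y * W = y * (l * e) - y * (Q' * (l * e)) := by
      have hexp : (1 - Q') * (l * e) = l * e - Q' * (l * e) := by noncomm_ring
      rw [hWdef, hexp, mul_sub]
    have h2 : y * (l * e) = e := by rw [← mul_assoc, hyl, one_mul]
    have h3 : y * (Q' * (l * e)) = (1 + u) * c₀ := by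
      calc y * (Q' * (l * e)) = (y * z) * (γ * (star z * (l * e))) := by
            rw [hQ'def]; simp only [mul_assoc]
        _ = ((1 + u) * (1 - e)) * (γ * (star z * (l * e))) := by rw [hyz]
        _ = (1 + u) * ((1 - e) * (γ * (star z * (l * e)))) := by rw [mul_assoc]
        _ = (1 + u) * c₀ := by rw [hγmul, hc₀def]
    rw [h1, h2, h3]
  -- the Neumann-series correction on the corner eAe
  set s : A := e - e * (v₀ * e) with hsdef
  have hs_eq : s = e * ((u * v₀) * e) := by
    have huv₀ : u * v₀ = 1 - v₀ := by
      have h := hv₀r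
      rw [add_mul, one_mul] at h
      exact eq_sub_of_add_eq' h
    rw [huv₀, hsdef, sub_mul, one_mul, mul_sub, ← mul_assoc, he2]
  have hs_norm : ‖s‖ < 1 := by
    have h1 : ‖s‖ ≤ ‖e‖ * ‖(u * v₀) * e‖ := by rw [hs_eq]; exact norm_mul_le _ _
    have h2 : ‖(u * v₀) * e‖ ≤ ‖u * v₀‖ * ‖e‖ := norm_mul_le _ _
    have h3 : ‖u * v₀‖ ≤ ‖u‖ * ‖v₀‖ := norm_mul_le _ _
    have h4 : ‖e‖ ≤ 1 := aux_norm_proj_le_one hse he2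
    calc ‖s‖ ≤ ‖e‖ * ‖(u * v₀) * e‖ := h1
      _ ≤ 1 * ‖(u * v₀) * e‖ := mul_le_mul_of_nonneg_right h4 (norm_nonneg _)
      _ = ‖(u * v₀) * e‖ := one_mul _
      _ ≤ ‖u * v₀‖ * ‖e‖ := norm_mul_le _ _
      _ ≤ ‖u * v₀‖ * 1 := mul_le_mul_of_nonneg_left h4 (norm_nonneg _)
      _ = ‖u * v₀‖ := mul_one _
      _ ≤ ‖u‖ * ‖v₀‖ := norm_mul_le _ _
      _ ≤ ‖u‖ * (3 / 2) := mul_le_mul_of_nonneg_left hv₀n (norm_nonneg u)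
      _ < 1 := by linarith
  have hs_e : s * e = s := by
    rw [hsdef, sub_mul, he2, mul_assoc, mul_assoc, he2]
  set V₂ : Aˣ := Units.oneSub s hs_norm with hV₂def
  have hV₂val : (V₂ : A) = 1 - s := by rw [hV₂def, Units.val_oneSub]
  set σ : A := ((V₂⁻¹ : Aˣ) : A) with hσdef
  have hσl : σ * (1 - s) = 1 := by rw [hσdef, ← hV₂val]; exact V₂.inv_mul
  have h1se : (1 - s) * e = e - s := by rw [sub_mul, one_mul, hs_e]
  set ρ : A := e * (σ * (e * (v₀ * y))) with hρdef
  have hρW : ρ * W = e := by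
    have h1 : v₀ * (y * W) = v₀ * e - c₀ := by
      rw [hyW, mul_sub, ← mul_assoc, hv₀l, one_mul]
    have h2 : e * (v₀ * (y * W)) = e - s := by
      rw [h1, mul_sub, hec₀, sub_zero, hsdef, sub_sub_cancel]
    calc ρ * W = e * (σ * (e * (v₀ * (y * W)))) := by rw [hρdef]; simp only [mul_assoc]
      _ = e * (σ * (e - s)) := by rw [h2]
      _ = e * (σ * ((1 - s) * e)) := by rw [h1se]
      _ = e * ((σ * (1 - s)) * e) := by rw [mul_assoc]
      _ = e * e := by rw [hσl, one_mul]
      _ = e := he2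
  obtain ⟨g, hgs, hge, heg, hgWW, hWWg, hgspec⟩ := aux_corner_inv hse he2 hWe hρW
  -- the square root of g and the partial isometry
  set sq : A := cfc Real.sqrt g with hsqdef
  have hg_sa : IsSelfAdjoint g := hgs
  have hsq_comm : (star W * W) * sq = sq * (star W * W) := by
    rw [hsqdef]
    exact aux_commute_cfc hg_sa (by rw [hWWg, hgWW]) Real.sqrt
  have hsq_sa : star sq = sq := by
    rw [hsqdef]
    exact (cfc_predicate Real.sqrt g : IsSelfAdjoint _)
  have hsqsq : sq * sq = g := by
    rw [hsqdef]
    calc cfc Real.sqrt g * cfc Real.sqrt g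
        = cfc (fun x : ℝ => Real.sqrt x * Real.sqrt x) g := by
          rw [cfc_mul _ _ g Real.continuous_sqrt.continuousOn
            Real.continuous_sqrt.continuousOn]
      _ = cfc (fun x : ℝ => x) g := by
          apply cfc_congr
          intro x hx
          exact Real.mul_self_sqrt (hgspec x hx)
      _ = g := cfc_id' ℝ g hg_sa
  set p'' : A := W * (g * star W) with hp''def
  have hp''s : star p'' = p'' := by
    rw [hp''def, star_mul, star_mul, star_star, hgs, mul_assoc]
  have hp''idem : p'' * p'' = p'' := by
    calc p'' * p'' = W * ((g * (star W * W)) * (g * star W)) := by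
          rw [hp''def]; simp only [mul_assoc]
      _ = W * (e * (g * star W)) := by rw [hgWW]
      _ = W * ((e * g) * star W) := by rw [← mul_assoc e g (star W)]
      _ = p'' := by rw [heg, hp''def]
  have hWQ' : star W * Q' = 0 := by
    have h := congrArg star hQ'W
    rwa [star_mul, hQ's, star_zero] at h
  have hp''Q : p'' * Q = p'' := by
    have h1 : p'' * Q' = 0 := by
      calc p'' * Q' = W * (g * (star W * Q')) := by rw [hp''def]; simp only [mul_assoc]
        _ = 0 := by rw [hWQ', mul_zero, mul_zero]
    rw [hQdef, mul_sub, mul_one, h1, sub_zero]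
  have hQp'' : Q * p'' = p'' := by
    have h1 : Q' * p'' = 0 := by
      calc Q' * p'' = (Q' * W) * (g * star W) := by rw [hp''def, ← mul_assoc]
        _ = 0 := by rw [hQ'W, zero_mul]
    rw [hQdef, sub_mul, one_mul, h1, sub_zero]
  set vhat : A := sq * star W with hvhatdef
  have hvhat1 : vhat * star vhat = e := by
    have hstar : star vhat = W * sq := by
      rw [hvhatdef, star_mul, star_star, hsq_sa]
    calc vhat * star vhat = sq * star W * (W * sq) := by rw [hstar, hvhatdef]
      _ = sq * ((star W * W) * sq) := by simp only [mul_assoc]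
      _ = sq * (sq * (star W * W)) := by rw [hsq_comm]
      _ = (sq * sq) * (star W * W) := by rw [mul_assoc]
      _ = g * (star W * W) := by rw [hsqsq]
      _ = e := hgWW
  have hvhat2 : star vhat * vhat = p'' := by
    have hstar : star vhat = W * sq := by
      rw [hvhatdef, star_mul, star_star, hsq_sa]
    calc star vhat * vhat = W * sq * (sq * star W) := by rw [hstar, hvhatdef]
      _ = W * ((sq * sq) * star W) := by simp only [mul_assoc]
      _ = W * (g * star W) := by rw [hsqsq]
      _ = p'' := by rw [hp''def]
  -- assemble
  refine ⟨e, Q, heproj, ⟨hQs, hQ2⟩, heF, ?_, ?_⟩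
  · exact ⟨p'', ⟨hp''s, hp''idem⟩, hp''Q, hQp'', vhat, hvhat1, hvhat2⟩
  · exact ⟨γ * star z, hinv1, hinv2⟩
end

section
/- Let a, b ∈ A and projections p, q, p', q', p̃, q̃ with (1-q)a(1-p) = a, (1-q')b(1-p') = b, (1-q̃)ba(1-p̃) = ba, and a, b, ba invertible up to (p,q), (p',q'), (p̃,q̃) respectively. If p ∼ q and p' ∼ q', then p̃ ∼ q̃. -/
variable {A : Type*}

variable [CStarAlgebra A]

namespace MvNCompositionAux

/-- Gluing two algebraic equivalences of idempotents along absorption identities. -/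
theorem glue_pair {R : Type*} [Ring R] {x y s t e f g : R}
    (hxy : x * y = e) (hyx : y * x = f) (hst : s * t = f) (hts : t * s = g)
    (hxf : x * f = x) (hfs : f * s = s) :
    (x * s) * (t * y) = e ∧ (t * y) * (x * s) = g := by
  constructor
  · calc (x * s) * (t * y) = (x * (s * t)) * y := by noncomm_ring
      _ = x * y := by rw [hst, hxf]
      _ = e := hxy
  · calc (t * y) * (x * s) = t * ((y * x) * s) := by noncomm_ring
      _ = t * s := by rw [hyx, hfs]
      _ = g := hts

set_option maxHeartbeats 3200000 in
/-- The key ring-theoretic lemma: if `M = f * r` is a product of idempotents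
which is invertible up to the idempotent pair `(P, Q)`, then `P` and `Q` are
algebraically equivalent. -/
theorem exists_mul_eq_of_prod_idem {R : Type*} [Ring R] (f r P Q D : R)
    (hf : f * f = f) (hr : r * r = r) (hP : P * P = P) (hQ : Q * Q = Q)
    (h1 : f * (r * D) = 1 - Q) (h2 : D * (f * r) = 1 - P)
    (h3 : f * (r * P) = 0) (h4 : Q * (f * r) = 0)
    (h5 : P * D = 0) (h6 : D * Q = 0) :
    ∃ x y : R, x * y = P ∧ y * x = Q := by
  have hf' : ∀ z : R, f * (f * z) = f * z := fun z => by rw [← mul_assoc, hf]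
  have hr' : ∀ z : R, r * (r * z) = r * z := fun z => by rw [← mul_assoc, hr]
  have hP' : ∀ z : R, P * (P * z) = P * z := fun z => by rw [← mul_assoc, hP]
  have hQ' : ∀ z : R, Q * (Q * z) = Q * z := fun z => by rw [← mul_assoc, hQ]
  have h1' : ∀ z : R, f * (r * (D * z)) = z - Q * z := fun z => by
    rw [← mul_assoc, ← mul_assoc, mul_assoc f r D, h1, sub_mul, one_mul]
  have h2' : ∀ z : R, D * (f * (r * z)) = z - P * z := fun z => by
    rw [← mul_assoc, ← mul_assoc, mul_assoc D f r, h2, sub_mul, one_mul]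
  have h3' : ∀ z : R, f * (r * (P * z)) = 0 := fun z => by
    rw [← mul_assoc, ← mul_assoc, mul_assoc f r P, h3, zero_mul]
  have h4' : ∀ z : R, Q * (f * (r * z)) = 0 := fun z => by
    rw [← mul_assoc, ← mul_assoc, mul_assoc Q f r, h4, zero_mul]
  have h5' : ∀ z : R, P * (D * z) = 0 := fun z => by rw [← mul_assoc, h5, zero_mul]
  have h6' : ∀ z : R, D * (Q * z) = 0 := fun z => by rw [← mul_assoc, h6, zero_mul]
  have e0 : r * (1 - r) = 0 := by rw [mul_sub, mul_one, hr, sub_self]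
  have e1 : (1 - P) * (1 - r) = 0 := by
    rw [← h2, mul_assoc D (f * r) (1 - r), mul_assoc f r (1 - r), e0, mul_zero, mul_zero]
  have hPr : P * r = P + r - 1 := by
    have h : P * r - (P + r - 1) = (1 - P) * (1 - r) := by noncomm_ring
    rw [e1] at h
    exact sub_eq_zero.mp h
  have e2 : (1 - f) * f = 0 := by rw [sub_mul, one_mul, hf, sub_self]
  have e3 : (1 - f) * (1 - Q) = 0 := by
    rw [← h1, ← mul_assoc, e2, zero_mul]
  have hfQ : f * Q = f + Q - 1 := by
    have h : f * Q - (f + Q - 1) = (1 - f) * (1 - Q) := by noncomm_ring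
    rw [e3] at h
    exact sub_eq_zero.mp h
  have hPr' : ∀ z : R, P * (r * z) = P * z + r * z - z := fun z => by
    rw [← mul_assoc, hPr, sub_mul, add_mul, one_mul]
  have hfQ' : ∀ z : R, f * (Q * z) = f * z + Q * z - z := fun z => by
    rw [← mul_assoc, hfQ, sub_mul, add_mul, one_mul]
  -- components
  have I1 : ((1 - r) + r * P) * ((1 - r) * P + r * P) = P := by
    simp only [mul_add, add_mul, mul_sub, sub_mul, mul_one, one_mul, mul_zero, zero_mul,
      mul_assoc, hf', hr', hP', hQ', h1', h2', h3', h4', h5', h6', hPr', hfQ',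
      hf, hr, hP, hQ, h1, h2, h3, h4, h5, h6, hPr, hfQ, sub_zero, zero_sub, add_zero, zero_add]
    try abel
  have I2 : ((1 - r) * P + r * P) * ((1 - r) + r * P) = (1 - r) + r * P := by
    simp only [mul_add, add_mul, mul_sub, sub_mul, mul_one, one_mul, mul_zero, zero_mul,
      mul_assoc, hf', hr', hP', hQ', h1', h2', h3', h4', h5', h6', hPr', hfQ',
      hf, hr, hP, hQ, h1, h2, h3, h4, h5, h6, hPr, hfQ, sub_zero, zero_sub, add_zero, zero_add]
    try abel
  have I3 : (((1 - r) - (1 - r) * (Q * f)) * ((1 - f) - r * P * (1 - f)) + (1 - r) * (Q * f) + r * P * (1 - f)) * (((1 - f) - r * P * (1 - f)) * ((1 - r * (D * f)) * ((1 - r) - (1 - r) * (Q * f))) + Q * f + r * P) = (1 - r) + r * P := by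
    simp only [mul_add, add_mul, mul_sub, sub_mul, mul_one, one_mul, mul_zero, zero_mul,
      mul_assoc, hf', hr', hP', hQ', h1', h2', h3', h4', h5', h6', hPr', hfQ',
      hf, hr, hP, hQ, h1, h2, h3, h4, h5, h6, hPr, hfQ, sub_zero, zero_sub, add_zero, zero_add]
    try abel
  have I4 : (((1 - f) - r * P * (1 - f)) * ((1 - r * (D * f)) * ((1 - r) - (1 - r) * (Q * f))) + Q * f + r * P) * (((1 - r) - (1 - r) * (Q * f)) * ((1 - f) - r * P * (1 - f)) + (1 - r) * (Q * f) + r * P * (1 - f)) = (1 - f) + Q * f := by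
    simp only [mul_add, add_mul, mul_sub, sub_mul, mul_one, one_mul, mul_zero, zero_mul,
      mul_assoc, hf', hr', hP', hQ', h1', h2', h3', h4', h5', h6', hPr', hfQ',
      hf, hr, hP, hQ, h1, h2, h3, h4, h5, h6, hPr, hfQ, sub_zero, zero_sub, add_zero, zero_add]
    try abel
  have I5 : (Q * (1 - f) + Q * f) * ((1 - f) + Q * f) = Q := by
    simp only [mul_add, add_mul, mul_sub, sub_mul, mul_one, one_mul, mul_zero, zero_mul,
      mul_assoc, hf', hr', hP', hQ', h1', h2', h3', h4', h5', h6', hPr', hfQ',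
      hf, hr, hP, hQ, h1, h2, h3, h4, h5, h6, hPr, hfQ, sub_zero, zero_sub, add_zero, zero_add]
    try abel
  have I6 : ((1 - f) + Q * f) * (Q * (1 - f) + Q * f) = (1 - f) + Q * f := by
    simp only [mul_add, add_mul, mul_sub, sub_mul, mul_one, one_mul, mul_zero, zero_mul,
      mul_assoc, hf', hr', hP', hQ', h1', h2', h3', h4', h5', h6', hPr', hfQ',
      hf, hr, hP, hQ, h1, h2, h3, h4, h5, h6, hPr, hfQ, sub_zero, zero_sub, add_zero, zero_add]
    try abel
  have I7 : ((1 - r) + r * P) * ((1 - r) + r * P) = (1 - r) + r * P := by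
    simp only [mul_add, add_mul, mul_sub, sub_mul, mul_one, one_mul, mul_zero, zero_mul,
      mul_assoc, hf', hr', hP', hQ', h1', h2', h3', h4', h5', h6', hPr', hfQ',
      hf, hr, hP, hQ, h1, h2, h3, h4, h5, h6, hPr, hfQ, sub_zero, zero_sub, add_zero, zero_add]
    try abel
  have I8 : ((1 - r) + r * P) * (((1 - r) - (1 - r) * (Q * f)) * ((1 - f) - r * P * (1 - f)) + (1 - r) * (Q * f) + r * P * (1 - f)) = ((1 - r) - (1 - r) * (Q * f)) * ((1 - f) - r * P * (1 - f)) + (1 - r) * (Q * f) + r * P * (1 - f) := by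
    simp only [mul_add, add_mul, mul_sub, sub_mul, mul_one, one_mul, mul_zero, zero_mul,
      mul_assoc, hf', hr', hP', hQ', h1', h2', h3', h4', h5', h6', hPr', hfQ',
      hf, hr, hP, hQ, h1, h2, h3, h4, h5, h6, hPr, hfQ, sub_zero, zero_sub, add_zero, zero_add]
    try abel
  have I9 : (((1 - r) - (1 - r) * (Q * f)) * ((1 - f) - r * P * (1 - f)) + (1 - r) * (Q * f) + r * P * (1 - f)) * ((1 - f) + Q * f) = ((1 - r) - (1 - r) * (Q * f)) * ((1 - f) - r * P * (1 - f)) + (1 - r) * (Q * f) + r * P * (1 - f) := by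
    simp only [mul_add, add_mul, mul_sub, sub_mul, mul_one, one_mul, mul_zero, zero_mul,
      mul_assoc, hf', hr', hP', hQ', h1', h2', h3', h4', h5', h6', hPr', hfQ',
      hf, hr, hP, hQ, h1, h2, h3, h4, h5, h6, hPr, hfQ, sub_zero, zero_sub, add_zero, zero_add]
    try abel
  have I10 : ((1 - f) + Q * f) * ((1 - f) + Q * f) = (1 - f) + Q * f := by
    simp only [mul_add, add_mul, mul_sub, sub_mul, mul_one, one_mul, mul_zero, zero_mul,
      mul_assoc, hf', hr', hP', hQ', h1', h2', h3', h4', h5', h6', hPr', hfQ',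
      hf, hr, hP, hQ, h1, h2, h3, h4, h5, h6, hPr, hfQ, sub_zero, zero_sub, add_zero, zero_add]
    try abel
  obtain ⟨g1a, g1b⟩ := glue_pair I1 I2 I3 I4 I7 I8
  obtain ⟨g2a, g2b⟩ := glue_pair g1a g1b I6 I5 (by rw [mul_assoc]; rw [I9]) I10
  exact ⟨_, _, g2a, g2b⟩

variable {A : Type*} [CStarAlgebra A]


set_option maxHeartbeats 1000000 in
/-- Algebraically equivalent projections in a unital C*-algebra are
Murray–von Neumann equivalent. -/
theorem exists_partialIsometry_of_mul_eq {p q : A}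
    (hp1 : IsSelfAdjoint p) (hp2 : p * p = p)
    (hq1 : IsSelfAdjoint q) (hq2 : q * q = q)
    {x y : A} (hxy0 : x * y = p) (hyx0 : y * x = q) :
    ∃ v : A, v * star v = p ∧ star v * v = q := by
  letI := CStarAlgebra.spectralOrder A
  letI := CStarAlgebra.spectralOrderedRing A
  obtain ⟨x', y', hxy', hyx', hpx', hx'q⟩ :
      ∃ x' y' : A, x' * y' = p ∧ y' * x' = q ∧ p * x' = x' ∧ x' * q = x' := by
    have hxq : x * q = p * x := by rw [← hyx0, ← mul_assoc, hxy0]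
    have hyp : y * p = q * y := by rw [← hxy0, ← mul_assoc, hyx0]
    have cp : ∀ z : A, p * (p * z) = p * z := fun z => by rw [← mul_assoc, hp2]
    have cq : ∀ z : A, q * (q * z) = q * z := fun z => by rw [← mul_assoc, hq2]
    have cxq : ∀ z : A, x * (q * z) = p * (x * z) := fun z => by
      rw [← mul_assoc, hxq, mul_assoc]
    have cxy : ∀ z : A, x * (y * z) = p * z := fun z => by rw [← mul_assoc, hxy0]
    have cyx : ∀ z : A, y * (x * z) = q * z := fun z => by rw [← mul_assoc, hyx0]
    have cyp : ∀ z : A, y * (p * z) = q * (y * z) := fun z => by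
      rw [← mul_assoc, hyp, mul_assoc]
    refine ⟨p * (x * q), q * (y * p), ?_, ?_, ?_, ?_⟩
    · simp only [mul_assoc, cq, cxq, cp, cxy, hp2]
    · simp only [mul_assoc, cp, cyp, cyx, cq, hq2]
    · simp only [← mul_assoc, hp2]
    · simp only [mul_assoc, hq2]
  have hsx'p : star x' * p = star x' := by
    have h := congrArg star hpx'
    rwa [star_mul, hp1.star_eq] at h
  have hqsx' : q * star x' = star x' := by
    have h := congrArg star hx'q
    rwa [star_mul, hq1.star_eq] at h
  have hee : (1 - p) * (1 - p) = 1 - p := by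
    have h : (1 - p) * (1 - p) - (1 - p) = p * p - p := by noncomm_ring
    rw [hp2, sub_self] at h
    exact sub_eq_zero.mp h
  have he1 : IsSelfAdjoint (1 - p : A) := (IsSelfAdjoint.one (R := A)).sub hp1
  have he_nonneg : (0 : A) ≤ 1 - p := by
    have h := star_mul_self_nonneg (1 - p : A)
    rwa [he1.star_eq, hee] at h
  have hp_nonneg : (0 : A) ≤ p := by
    have h := star_mul_self_nonneg p
    rwa [hp1.star_eq, hp2] at h
  have hex' : (1 - p) * x' = 0 := by rw [sub_mul, one_mul, hpx', sub_self]
  have hx'e : star x' * (1 - p) = 0 := by rw [mul_sub, mul_one, hsx'p, sub_self]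
  set a := x' * star x' + (1 - p) with hadef
  have ha1 : IsSelfAdjoint a := (IsSelfAdjoint.mul_star_self x').add he1
  have ha_nonneg : (0 : A) ≤ a := add_nonneg (mul_star_self_nonneg x') he_nonneg
  have hae : a * (1 - p) = 1 - p := by
    rw [hadef, add_mul, mul_assoc, hx'e, mul_zero, zero_add, hee]
  have hea : (1 - p) * a = 1 - p := by
    rw [hadef, mul_add, ← mul_assoc, hex', zero_mul, zero_add, hee]
  have hap : a * p = x' * star x' := by
    rw [hadef, add_mul, mul_assoc, hsx'p, sub_mul, one_mul, hp2, sub_self, add_zero]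
  have hpa : p * a = x' * star x' := by
    rw [hadef, mul_add, ← mul_assoc, hpx', mul_sub, mul_one, hp2, sub_self, add_zero]
  have hpa' : p * a = a * p := by rw [hpa, hap]
  have hxx : x' * star x' = a - (1 - p) := by rw [hadef, add_sub_cancel_right]
  by_cases hy'0 : y' * star y' = 0
  · have hy'z : y' = 0 := (CStarRing.mul_star_self_eq_zero_iff y').mp hy'0
    have hq0 : q = 0 := by rw [← hyx', hy'z, zero_mul]
    have hp0 : p = 0 := by rw [← hxy', hy'z, mul_zero]
    exact ⟨0, by simp [hp0, hq0]⟩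
  have hNpos : 0 < ‖y' * star y'‖ := norm_pos_iff.mpr hy'0
  have hp_le : p ≤ ‖y' * star y'‖ • (x' * star x') := by
    have key := CStarAlgebra.star_right_conjugate_le_norm_smul (a := x') (b := y' * star y')
        (IsSelfAdjoint.mul_star_self y')
    have hshape : x' * (y' * star y') * star x' = p := by
      have h1 : (x' * y') * star (x' * y') = p := by rw [hxy', hp1.star_eq, hp2]
      have h2 : (x' * y') * star (x' * y') = x' * (y' * star y') * star x' := by
        rw [star_mul]; noncomm_ring
      rw [← h2]; exact h1
    calc p = x' * (y' * star y') * star x' := hshape.symm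
      _ ≤ ‖y' * star y'‖ • (x' * star x') := key
  set ε := min ‖y' * star y'‖⁻¹ 1 with hεdef
  have hεpos : 0 < ε := lt_min (by positivity) one_pos
  have hεsmul_le : ε • (1 : A) ≤ a := by
    have h1 : ε • p ≤ ‖y' * star y'‖⁻¹ • p :=
      smul_le_smul_of_nonneg_right (min_le_left _ _) hp_nonneg
    have h2 : ‖y' * star y'‖⁻¹ • p ≤ ‖y' * star y'‖⁻¹ • (‖y' * star y'‖ • (x' * star x')) :=
      smul_le_smul_of_nonneg_left hp_le (by positivity)
    have h3 : ‖y' * star y'‖⁻¹ • (‖y' * star y'‖ • (x' * star x')) = x' * star x' := by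
      rw [smul_smul, inv_mul_cancel₀ hNpos.ne', one_smul]
    have h4 : ε • ((1 : A) - p) ≤ 1 - p := by
      calc ε • ((1:A) - p) ≤ (1 : ℝ) • ((1:A) - p) :=
            smul_le_smul_of_nonneg_right (min_le_right _ _) he_nonneg
        _ = 1 - p := one_smul _ _
    calc ε • (1 : A) = ε • p + ε • ((1:A) - p) := by rw [← smul_add, add_sub_cancel]
      _ ≤ x' * star x' + (1 - p) := add_le_add ((h1.trans h2).trans_eq h3) h4
      _ = a := hadef.symm
  have hspec : ∀ t ∈ spectrum ℝ a, ε ≤ t := by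
    intro t ht
    have h1 : (0 : A) ≤ a - algebraMap ℝ A ε := by
      rw [sub_nonneg, Algebra.algebraMap_eq_smul_one]; exact hεsmul_le
    have h2 : t - ε ∈ spectrum ℝ (a - algebraMap ℝ A ε) := by
      rw [← spectrum.sub_singleton_eq]
      exact Set.sub_mem_sub ht rfl
    have h3 := spectrum_nonneg_of_nonneg h1 h2
    linarith
  have hcont : ContinuousOn (fun t : ℝ => (Real.sqrt t)⁻¹) (spectrum ℝ a) := by
    apply ContinuousOn.inv₀ Real.continuous_sqrt.continuousOn
    intro t ht
    exact (Real.sqrt_pos.mpr (lt_of_lt_of_le hεpos (hspec t ht))).ne'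
  set s := cfc (fun t : ℝ => (Real.sqrt t)⁻¹) a with hsdef
  have hs_sa : IsSelfAdjoint s := cfc_predicate _ a
  have hs_nonneg : (0 : A) ≤ s := cfc_nonneg (fun t _ => by positivity)
  have hcomm_sa : s * a = a * s := by
    have h := cfc_commute_cfc (fun t : ℝ => (Real.sqrt t)⁻¹) (id : ℝ → ℝ) a
    rw [cfc_id ℝ a] at h
    exact h.eq
  have hss : s * s = cfc (fun t : ℝ => t⁻¹) a := by
    rw [hsdef, ← cfc_mul _ _ a hcont hcont]
    exact cfc_congr fun t ht => by
      rw [← mul_inv, Real.mul_self_sqrt (by have := hspec t ht; linarith)]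
  have hssa : (s * s) * a = 1 := by
    rw [hss]
    have hcont2 : ContinuousOn (fun t : ℝ => t⁻¹) (spectrum ℝ a) := by
      apply ContinuousOn.inv₀ continuousOn_id
      intro t ht
      exact (lt_of_lt_of_le hεpos (hspec t ht)).ne'
    calc cfc (fun t : ℝ => t⁻¹) a * a = cfc (fun t : ℝ => t⁻¹) a * cfc (fun t : ℝ => t) a := by
          rw [cfc_id' ℝ a]
      _ = cfc (fun t : ℝ => t⁻¹ * t) a := (cfc_mul _ _ a hcont2 continuousOn_id).symm
      _ = cfc (fun _ : ℝ => (1 : ℝ)) a := cfc_congr fun t ht =>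
            inv_mul_cancel₀ (lt_of_lt_of_le hεpos (hspec t ht)).ne'
      _ = 1 := cfc_const_one ℝ a
  have hass : a * (s * s) = 1 := by
    have h : a * (s * s) = (s * s) * a := by
      rw [← mul_assoc, ← hcomm_sa, mul_assoc, ← hcomm_sa, ← mul_assoc]
    rw [h, hssa]
  have hsas : s * a * s = 1 := by rw [hcomm_sa, mul_assoc]; exact hass
  have hm_e : (s * s) * (1 - p) = 1 - p := by
    calc (s * s) * (1 - p) = (s * s) * (a * (1 - p)) := by rw [hae]
      _ = ((s * s) * a) * (1 - p) := by noncomm_ring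
      _ = 1 - p := by rw [hssa, one_mul]
  have he_m : (1 - p) * (s * s) = 1 - p := by
    calc (1 - p) * (s * s) = ((1 - p) * a) * (s * s) := by rw [hea]
      _ = (1 - p) * (a * (s * s)) := by noncomm_ring
      _ = 1 - p := by rw [hass, mul_one]
  -- commutation of `s` with `p` via uniqueness of positive square roots
  have hps : p * s = s * p := by
    set J := p + p - 1 with hJdef
    have hJJ : J * J = 1 := by
      have h : J * J - 1 = ((p * p - p) + (p * p - p)) + ((p * p - p) + (p * p - p)) := by
        rw [hJdef]; noncomm_ring
      rw [hp2, sub_self, add_zero, add_zero] at h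
      exact sub_eq_zero.mp h
    have hJa : J * a = a * J := by
      rw [hJdef]
      simp only [add_mul, mul_add, sub_mul, mul_sub, one_mul, mul_one, hpa']
    have hJstar : star J = J := by
      rw [hJdef]; simp [star_sub, star_add, star_one, hp1.star_eq]
    have hsqrt : CFC.sqrt s * CFC.sqrt s = s := CFC.sqrt_mul_sqrt_self s hs_nonneg
    have hsqrt_sa : IsSelfAdjoint (CFC.sqrt s) := IsSelfAdjoint.of_nonneg (CFC.sqrt_nonneg s)
    have hb_nonneg : (0 : A) ≤ J * s * J := by
      have h : star (CFC.sqrt s * J) * (CFC.sqrt s * J) = J * s * J := by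
        rw [star_mul, hJstar, hsqrt_sa.star_eq]
        calc J * CFC.sqrt s * (CFC.sqrt s * J)
            = J * (CFC.sqrt s * CFC.sqrt s) * J := by noncomm_ring
          _ = J * s * J := by rw [hsqrt]
      rw [← h]; exact star_mul_self_nonneg _
    have hJss : J * (s * s) = (s * s) * J := by
      calc J * (s * s) = ((s * s) * a) * (J * (s * s)) := by rw [hssa, one_mul]
        _ = (s * s) * ((a * J) * (s * s)) := by noncomm_ring
        _ = (s * s) * ((J * a) * (s * s)) := by rw [hJa]
        _ = (s * s) * (J * (a * (s * s))) := by rw [mul_assoc J a]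
        _ = (s * s) * J := by rw [hass, mul_one]
    have hbb : (J * s * J) * (J * s * J) = s * s := by
      have h1 : (J * s * J) * (J * s * J) - J * (s * s) * J
          = J * s * ((J * J) * (s * J)) - J * s * (1 * (s * J)) := by noncomm_ring
      rw [hJJ, sub_self] at h1
      have h2 : (J * s * J) * (J * s * J) = J * (s * s) * J := sub_eq_zero.mp h1
      calc (J * s * J) * (J * s * J) = J * (s * s) * J := h2
        _ = ((s * s) * J) * J := by rw [← hJss]
        _ = (s * s) * (J * J) := by rw [mul_assoc]
        _ = s * s := by rw [hJJ, mul_one]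
    have hJsJ : J * s * J = s := by
      have h1 : CFC.sqrt ((J * s * J) * (J * s * J)) = J * s * J :=
        CFC.sqrt_mul_self _ hb_nonneg
      rw [hbb] at h1
      rw [← h1]
      exact CFC.sqrt_mul_self s hs_nonneg
    have hJs : J * s = s * J := by
      calc J * s = (J * s) * (J * J) := by rw [hJJ, mul_one]
        _ = (J * s * J) * J := by noncomm_ring
        _ = s * J := by rw [hJsJ]
    have h2 : p * s + p * s = s * p + s * p := by
      have h : (J * s - s * J) + (s * p + s * p) = p * s + p * s := by
        rw [hJdef]; noncomm_ring
      rw [hJs, sub_self, zero_add] at h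
      exact h.symm
    have h3 : (2 : ℝ) • (p * s) = (2 : ℝ) • (s * p) := by
      rw [two_smul, two_smul]; exact h2
    have h4 : p * s = (2⁻¹ : ℝ) • ((2 : ℝ) • (p * s)) := by
      rw [smul_smul]; norm_num
    rw [h4, h3, smul_smul]; norm_num
  have hesp : (1 - p) * s = s * (1 - p) := by
    rw [sub_mul, mul_sub, one_mul, mul_one, hps]
  have hses : s * (1 - p) * s = 1 - p := by
    calc s * (1 - p) * s = ((1 - p) * s) * s := by rw [← hesp]
      _ = (1 - p) * (s * s) := by rw [mul_assoc]
      _ = 1 - p := he_m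
  refine ⟨s * x', ?_, ?_⟩
  · have hstar : star (s * x') = star x' * s := by rw [star_mul, hs_sa.star_eq]
    rw [hstar]
    calc s * x' * (star x' * s) = s * (x' * star x') * s := by noncomm_ring
      _ = s * (a - (1 - p)) * s := by rw [hxx]
      _ = s * a * s - s * (1 - p) * s := by noncomm_ring
      _ = 1 - (1 - p) := by rw [hsas, hses]
      _ = p := by rw [sub_sub_cancel]
  · have hstar : star (s * x') = star x' * s := by rw [star_mul, hs_sa.star_eq]
    rw [hstar]
    have hw : star x' * s * (s * x') = star x' * ((s * s) * x') := by noncomm_ring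
    rw [hw]
    set w := star x' * ((s * s) * x') with hwdef
    have hi : x' * w = x' := by
      rw [hwdef]
      calc x' * (star x' * ((s * s) * x')) = (x' * star x') * ((s * s) * x') := by
            noncomm_ring
        _ = (a - (1 - p)) * ((s * s) * x') := by rw [hxx]
        _ = a * ((s * s) * x') - (1 - p) * ((s * s) * x') := by rw [sub_mul]
        _ = (a * (s * s)) * x' - ((1 - p) * (s * s)) * x' := by noncomm_ring
        _ = x' - 0 := by rw [hass, one_mul, he_m, hex']
        _ = x' := sub_zero x'
    have hqw : q * w = w := by rw [hwdef, ← mul_assoc, hqsx']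
    have hwq : w * q = w := by rw [hwdef, mul_assoc, mul_assoc, hx'q]
    have hfinal : q - w = 0 := by
      have h1 : q * (q - w) = q - w := by rw [mul_sub, hq2, hqw]
      have h2 : x' * (q - w) = 0 := by rw [mul_sub, hx'q, hi, sub_self]
      calc q - w = q * (q - w) := h1.symm
        _ = (y' * x') * (q - w) := by rw [hyx']
        _ = y' * (x' * (q - w)) := by rw [mul_assoc]
        _ = 0 := by rw [h2, mul_zero]
    exact (sub_eq_zero.mp hfinal).symm


end MvNCompositionAux

/-- Proposition 20 of [BJMA]: if `a, b, ba` are diagonal with respect to, and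
invertible up to, the pairs `(p,q)`, `(p',q')`, `(p̃,q̃)` respectively, and
`p ∼ q`, `p' ∼ q'`, then `p̃ ∼ q̃`. -/
theorem mvnEquiv_of_composition (a b p q p' q' pt qt : A)
    (hp : IsProjectionElem p) (hq : IsProjectionElem q)
    (hp' : IsProjectionElem p') (hq' : IsProjectionElem q')
    (hpt : IsProjectionElem pt) (hqt : IsProjectionElem qt)
    (hda : (1 - q) * a * (1 - p) = a)
    (hdb : (1 - q') * b * (1 - p') = b)
    (hdba : (1 - qt) * (b * a) * (1 - pt) = b * a)
    (hia : InvertibleUpTo a p q)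
    (hib : InvertibleUpTo b p' q')
    (hiba : InvertibleUpTo (b * a) pt qt)
    (e1 : MvNEquiv p q) (e2 : MvNEquiv p' q') :
    MvNEquiv pt qt := by
  obtain ⟨v, hv1, hv2⟩ := e1
  obtain ⟨v', hv1', hv2'⟩ := e2
  have compl_idem : ∀ z : A, z * z = z → (1 - z) * (1 - z) = 1 - z := fun z hz => by
    rw [mul_sub, mul_one, sub_mul, one_mul, hz, sub_self, sub_zero]
  -- `v` and `v'` are partial isometries
  have partial_isom : ∀ e f z : A, IsSelfAdjoint e → e * e = e → z * star z = e →
      star z * z = f → e * z = z := by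
    intro e f z he1 he2 hz1 hz2
    have expand : (e * z - z) * (star z * e - star z)
        = e * (z * star z) * e - e * (z * star z) - (z * star z) * e + (z * star z) := by
      noncomm_ring
    rw [hz1, he2] at expand
    rw [he2] at expand
    have hz0 : (e * z - z) * star (e * z - z) = 0 := by
      rw [star_sub, star_mul, he1.star_eq, expand]
      abel
    have h := (CStarRing.mul_star_self_eq_zero_iff _).mp hz0
    exact sub_eq_zero.mp h
  have hpv : p * v = v := partial_isom p q v hp.1 hp.2 hv1 hv2
  have hvq : v * q = v := by rw [← hv2, ← mul_assoc, hv1, hpv]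
  have hsvp : star v * p = star v := by
    have h := congrArg star hpv; rwa [star_mul, hp.1.star_eq] at h
  have hqsv : q * star v = star v := by
    have h := congrArg star hvq; rwa [star_mul, hq.1.star_eq] at h
  have hpv' : p' * v' = v' := partial_isom p' q' v' hp'.1 hp'.2 hv1' hv2'
  have hvq' : v' * q' = v' := by rw [← hv2', ← mul_assoc, hv1', hpv']
  have hsvp' : star v' * p' = star v' := by
    have h := congrArg star hpv'; rwa [star_mul, hp'.1.star_eq] at h
  have hqsv' : q' * star v' = star v' := by
    have h := congrArg star hvq'; rwa [star_mul, hq'.1.star_eq] at h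
  -- diagonality facts
  have diag_right : ∀ z e f : A, e * e = e → (1 - f) * z * (1 - e) = z → z * e = 0 := by
    intro z e f he hd
    have h1 : (1 - e) * e = 0 := by rw [sub_mul, one_mul, he, sub_self]
    rw [← hd, mul_assoc, h1, mul_zero]
  have diag_left : ∀ z e f : A, f * f = f → (1 - f) * z * (1 - e) = z → f * z = 0 := by
    intro z e f hf hd
    have h1 : f * (1 - f) = 0 := by rw [mul_sub, mul_one, hf, sub_self]
    rw [← hd, ← mul_assoc, ← mul_assoc, h1, zero_mul, zero_mul]
  have ha_p : a * p = 0 := diag_right a p q hp.2 hda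
  have hq_a : q * a = 0 := diag_left a p q hq.2 hda
  have ha1p : a * (1 - p) = a := by rw [mul_sub, mul_one, ha_p, sub_zero]
  have h1qa : (1 - q) * a = a := by rw [sub_mul, one_mul, hq_a, sub_zero]
  have hb_p' : b * p' = 0 := diag_right b p' q' hp'.2 hdb
  have hq'_b : q' * b = 0 := diag_left b p' q' hq'.2 hdb
  have hb1p' : b * (1 - p') = b := by rw [mul_sub, mul_one, hb_p', sub_zero]
  have h1q'b : (1 - q') * b = b := by rw [sub_mul, one_mul, hq'_b, sub_zero]
  have hba_pt : (b * a) * pt = 0 := diag_right (b * a) pt qt hpt.2 hdba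
  have hqt_ba : qt * (b * a) = 0 := diag_left (b * a) pt qt hqt.2 hdba
  have hba1pt : (b * a) * (1 - pt) = b * a := by rw [mul_sub, mul_one, hba_pt, sub_zero]
  have h1qtba : (1 - qt) * (b * a) = b * a := by rw [sub_mul, one_mul, hqt_ba, sub_zero]
  -- normalized partial inverses
  obtain ⟨c, hc1, hc2⟩ := hia
  rw [hda] at hc1 hc2
  obtain ⟨c', hc1', hc2'⟩ := hib
  rw [hdb] at hc1' hc2'
  obtain ⟨d0, hd01, hd02⟩ := hiba
  rw [hdba] at hd01 hd02
  obtain ⟨ai, haidef⟩ : ∃ ai : A, ai = (1 - p) * (c * (1 - q)) := ⟨_, rfl⟩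
  obtain ⟨bi, hbidef⟩ : ∃ bi : A, bi = (1 - p') * (c' * (1 - q')) := ⟨_, rfl⟩
  obtain ⟨d, hddef⟩ : ∃ d : A, d = (1 - pt) * (d0 * (1 - qt)) := ⟨_, rfl⟩
  have haai : a * ai = 1 - q := by
    rw [haidef, ← mul_assoc, ha1p, ← mul_assoc, hc1, compl_idem q hq.2]
  have haia : ai * a = 1 - p := by
    rw [haidef, mul_assoc, mul_assoc, h1qa, hc2, compl_idem p hp.2]
  have hp_ai : p * ai = 0 := by
    have h1 : p * (1 - p) = 0 := by rw [mul_sub, mul_one, hp.2, sub_self]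
    rw [haidef, ← mul_assoc, h1, zero_mul]
  have hai_q : ai * q = 0 := by
    have h1 : (1 - q) * q = 0 := by rw [sub_mul, one_mul, hq.2, sub_self]
    rw [haidef, mul_assoc, mul_assoc, h1, mul_zero, mul_zero]
  have hbbi : b * bi = 1 - q' := by
    rw [hbidef, ← mul_assoc, hb1p', ← mul_assoc, hc1', compl_idem q' hq'.2]
  have hbib : bi * b = 1 - p' := by
    rw [hbidef, mul_assoc, mul_assoc, h1q'b, hc2', compl_idem p' hp'.2]
  have hp'_bi : p' * bi = 0 := by
    have h1 : p' * (1 - p') = 0 := by rw [mul_sub, mul_one, hp'.2, sub_self]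
    rw [hbidef, ← mul_assoc, h1, zero_mul]
  have hbi_q' : bi * q' = 0 := by
    have h1 : (1 - q') * q' = 0 := by rw [sub_mul, one_mul, hq'.2, sub_self]
    rw [hbidef, mul_assoc, mul_assoc, h1, mul_zero, mul_zero]
  have hbad : (b * a) * d = 1 - qt := by
    rw [hddef, ← mul_assoc, hba1pt, ← mul_assoc, hd01, compl_idem qt hqt.2]
  have hdba2 : d * (b * a) = 1 - pt := by
    rw [hddef, mul_assoc, mul_assoc, h1qtba, hd02, compl_idem pt hpt.2]
  have hpt_d : pt * d = 0 := by
    have h1 : pt * (1 - pt) = 0 := by rw [mul_sub, mul_one, hpt.2, sub_self]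
    rw [hddef, ← mul_assoc, h1, zero_mul]
  have hd_qt : d * qt = 0 := by
    have h1 : (1 - qt) * qt = 0 := by rw [sub_mul, one_mul, hqt.2, sub_self]
    rw [hddef, mul_assoc, mul_assoc, h1, mul_zero, mul_zero]
  -- the invertible elements u, w, g
  obtain ⟨u, iu, hudef, hiudef⟩ : ∃ u iu : A, u = a + star v ∧ iu = ai + v := ⟨_, _, rfl, rfl⟩
  obtain ⟨w, iw, hwdef, hiwdef⟩ : ∃ w iw : A, w = b + star v' ∧ iw = bi + v' := ⟨_, _, rfl, rfl⟩
  have hsv1p : star v * (1 - p) = 0 := by rw [mul_sub, mul_one, hsvp, sub_self]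
  have hsv1p' : star v' * (1 - p') = 0 := by rw [mul_sub, mul_one, hsvp', sub_self]
  have huiu : u * iu = 1 := by
    have hav : a * v = 0 := by rw [← hpv, ← mul_assoc, ha_p, zero_mul]
    have hsvai : star v * ai = 0 := by rw [← hsvp, mul_assoc, hp_ai, mul_zero]
    rw [hudef, hiudef, add_mul, mul_add, mul_add, haai, hav, hsvai, hv2, add_zero, zero_add,
      sub_add_cancel]
  have hiuu : iu * u = 1 := by
    have hva : v * a = 0 := by rw [← hvq, mul_assoc, hq_a, mul_zero]
    have haisv : ai * star v = 0 := by rw [← hqsv, ← mul_assoc, hai_q, zero_mul]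
    rw [hudef, hiudef, add_mul, mul_add, mul_add, haia, haisv, hva, hv1, add_zero, zero_add,
      sub_add_cancel]
  have hwiw : w * iw = 1 := by
    have hbv : b * v' = 0 := by rw [← hpv', ← mul_assoc, hb_p', zero_mul]
    have hsvbi : star v' * bi = 0 := by rw [← hsvp', mul_assoc, hp'_bi, mul_zero]
    rw [hwdef, hiwdef, add_mul, mul_add, mul_add, hbbi, hbv, hsvbi, hv2', add_zero, zero_add,
      sub_add_cancel]
  have hiww : iw * w = 1 := by
    have hvb : v' * b = 0 := by rw [← hvq', mul_assoc, hq'_b, mul_zero]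
    have hbisv : bi * star v' = 0 := by rw [← hqsv', ← mul_assoc, hbi_q', zero_mul]
    rw [hwdef, hiwdef, add_mul, mul_add, mul_add, hbib, hbisv, hvb, hv1', add_zero, zero_add,
      sub_add_cancel]
  obtain ⟨g, ig, hgdef, higdef⟩ : ∃ g ig : A, g = w * u ∧ ig = iu * iw := ⟨_, _, rfl, rfl⟩
  have hgig : g * ig = 1 := by
    calc g * ig = w * ((u * iu) * iw) := by rw [hgdef, higdef]; noncomm_ring
      _ = w * iw := by rw [huiu, one_mul]
      _ = 1 := hwiw
  have higg : ig * g = 1 := by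
    calc ig * g = iu * ((iw * w) * u) := by rw [hgdef, higdef]; noncomm_ring
      _ = iu * u := by rw [hiww, one_mul]
      _ = 1 := hiuu
  have hu1p : u * (1 - p) = a := by rw [hudef, add_mul, ha1p, hsv1p, add_zero]
  have hw1p' : w * (1 - p') = b := by rw [hwdef, add_mul, hb1p', hsv1p', add_zero]
  obtain ⟨F, hFdef⟩ : ∃ F : A, F = iu * ((1 - p') * u) := ⟨_, rfl⟩
  have hgFR : g * (F * (1 - p)) = b * a := by
    calc g * (F * (1 - p)) = w * ((u * iu) * ((1 - p') * (u * (1 - p)))) := by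
          rw [hgdef, hFdef]; noncomm_ring
      _ = w * ((1 - p') * a) := by rw [huiu, one_mul, hu1p]
      _ = (w * (1 - p')) * a := by noncomm_ring
      _ = b * a := by rw [hw1p']
  have hFR : F * (1 - p) = ig * (b * a) := by
    calc F * (1 - p) = (ig * g) * (F * (1 - p)) := by rw [higg, one_mul]
      _ = ig * (g * (F * (1 - p))) := by rw [mul_assoc]
      _ = ig * (b * a) := by rw [hgFR]
  have hFF : F * F = F := by
    calc F * F = iu * ((1 - p') * ((u * iu) * ((1 - p') * u))) := by rw [hFdef]; noncomm_ring
      _ = iu * ((1 - p') * ((1 - p') * u)) := by rw [huiu, one_mul]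
      _ = iu * (((1 - p') * (1 - p')) * u) := by noncomm_ring
      _ = F := by rw [compl_idem p' hp'.2, hFdef]
  have hQQ : (ig * (qt * g)) * (ig * (qt * g)) = ig * (qt * g) := by
    calc (ig * (qt * g)) * (ig * (qt * g)) = ig * (qt * ((g * ig) * (qt * g))) := by noncomm_ring
      _ = ig * (qt * (qt * g)) := by rw [hgig, one_mul]
      _ = ig * ((qt * qt) * g) := by noncomm_ring
      _ = ig * (qt * g) := by rw [hqt.2]
  have h1 : F * ((1 - p) * (d * g)) = 1 - ig * (qt * g) := by
    calc F * ((1 - p) * (d * g)) = (F * (1 - p)) * (d * g) := by noncomm_ring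
      _ = (ig * (b * a)) * (d * g) := by rw [hFR]
      _ = ig * (((b * a) * d) * g) := by noncomm_ring
      _ = ig * ((1 - qt) * g) := by rw [hbad]
      _ = ig * g - ig * (qt * g) := by rw [sub_mul, one_mul, mul_sub]
      _ = 1 - ig * (qt * g) := by rw [higg]
  have h2 : (d * g) * (F * (1 - p)) = 1 - pt := by
    calc (d * g) * (F * (1 - p)) = (d * g) * (ig * (b * a)) := by rw [hFR]
      _ = d * ((g * ig) * (b * a)) := by noncomm_ring
      _ = d * (b * a) := by rw [hgig, one_mul]
      _ = 1 - pt := hdba2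
  have h3 : F * ((1 - p) * pt) = 0 := by
    calc F * ((1 - p) * pt) = (F * (1 - p)) * pt := by noncomm_ring
      _ = (ig * (b * a)) * pt := by rw [hFR]
      _ = ig * ((b * a) * pt) := by rw [mul_assoc]
      _ = 0 := by rw [hba_pt, mul_zero]
  have h4 : (ig * (qt * g)) * (F * (1 - p)) = 0 := by
    calc (ig * (qt * g)) * (F * (1 - p)) = (ig * (qt * g)) * (ig * (b * a)) := by rw [hFR]
      _ = ig * (qt * ((g * ig) * (b * a))) := by noncomm_ring
      _ = ig * (qt * (b * a)) := by rw [hgig, one_mul]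
      _ = 0 := by rw [hqt_ba, mul_zero]
  have h5 : pt * (d * g) = 0 := by rw [← mul_assoc, hpt_d, zero_mul]
  have h6 : (d * g) * (ig * (qt * g)) = 0 := by
    calc (d * g) * (ig * (qt * g)) = d * ((g * ig) * (qt * g)) := by noncomm_ring
      _ = d * (qt * g) := by rw [hgig, one_mul]
      _ = (d * qt) * g := by rw [mul_assoc]
      _ = 0 := by rw [hd_qt, zero_mul]
  obtain ⟨x, y, hxyP, hyxQ⟩ := MvNCompositionAux.exists_mul_eq_of_prod_idem F (1 - p) pt
    (ig * (qt * g)) (d * g) hFF (compl_idem p hp.2) hpt.2 hQQ h1 h2 h3 h4 h5 h6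
  have hXY : (x * ig) * (g * y) = pt := by
    calc (x * ig) * (g * y) = x * ((ig * g) * y) := by noncomm_ring
      _ = x * y := by rw [higg, one_mul]
      _ = pt := hxyP
  have hYX : (g * y) * (x * ig) = qt := by
    calc (g * y) * (x * ig) = g * ((y * x) * ig) := by noncomm_ring
      _ = g * ((ig * (qt * g)) * ig) := by rw [hyxQ]
      _ = (g * ig) * (qt * (g * ig)) := by noncomm_ring
      _ = 1 * (qt * 1) := by rw [hgig]
      _ = qt := by rw [one_mul, mul_one]
  exact MvNCompositionAux.exists_partialIsometry_of_mul_eq hpt.1 hpt.2 hqt.1 hqt.2 hXY hYX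
end
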